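/- arXiv:2401.03909 — 7 statements merged into one kernel-verified Lean document; each statement's English description precedes it below -/
import Mathlib

section
/- Let V be an n-dimensional real vector space with a nondegenerate symmetric bilinear form g, and let W be a Weyl-type tensor on V, i.e. a (0,4)-tensor satisfying W(a,b,c,d) = -W(b,a,c,d) = -W(a,b,d,c) = W(c,d,a,b), the first Bianchi identity, and vanishing of all traces with respect to g. If there exist n-3 vectors v_1,...,v_{n-3} in V that are orthonormal with respect to g (i.e. g(v_i,v_j) = ±δ_{ij}) and satisfy W(a,b,c,v_i) = 0 for all a,b,c ∈ V and all i, then W = 0. -/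
/-- A "Weyl-type" tensor `W` on a real vector space `V` with a symmetric bilinear form `g`
admitting an orthonormal basis `b` with signs `ε`: `W` is (multi)linear, antisymmetric in the
first and last index pairs, satisfies the pair-interchange symmetry, the first Bianchi identity,
and is totally trace-free with respect to `g`. -/
def IsWeylLike {V : Type*} [AddCommGroup V] [Module ℝ V] {n : ℕ}
    (g : V → V → ℝ) (W : V → V → V → V → ℝ)
    (b : Module.Basis (Fin n) ℝ V) (ε : Fin n → ℝ) : Prop :=
  (∀ i, ε i = 1 ∨ ε i = -1) ∧
  (∀ i j, g (b i) (b j) = if i = j then ε i else 0) ∧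
  (∀ x y, g x y = g y x) ∧
  (∀ x x' y, g (x + x') y = g x y + g x' y) ∧
  (∀ (r : ℝ) (x y : V), g (r • x) y = r * g x y) ∧
  (∀ a a' c d e, W (a + a') c d e = W a c d e + W a' c d e) ∧
  (∀ (r : ℝ) (a c d e : V), W (r • a) c d e = r * W a c d e) ∧
  (∀ a c d e, W a c d e = - W c a d e) ∧
  (∀ a c d e, W a c d e = - W a c e d) ∧
  (∀ a c d e, W a c d e = W d e a c) ∧
  (∀ a c d e, W a c d e + W c d a e + W d a c e = 0) ∧
  (∀ a c, ∑ i, ε i * W (b i) a (b i) c = 0)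

/-- if a Weyl-type tensor on an `n`-dimensional space annihilates `n-3`
orthonormal vectors, it vanishes. -/
theorem weyl_eq_zero_of_orthonormal_kernel
    {V : Type*} [AddCommGroup V] [Module ℝ V] {n : ℕ} (hn : 4 ≤ n)
    (g : V → V → ℝ) (W : V → V → V → V → ℝ)
    (b : Module.Basis (Fin n) ℝ V) (ε : Fin n → ℝ)
    (hW : IsWeylLike g W b ε)
    (v : Fin (n - 3) → V) (δ : Fin (n - 3) → ℝ)
    (hδ : ∀ i, δ i = 1 ∨ δ i = -1)
    (horth : ∀ i j, g (v i) (v j) = if i = j then δ i else 0)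
    (hker : ∀ i a c d, W a c d (v i) = 0) :
    ∀ a c d e, W a c d e = 0 := by
  classical
  obtain ⟨hε, hgb, hgsymm, hgadd, hgsmul, hWa, hWs, hA1, hA2, hPr, hBi, hTr⟩ := hW
  clear hBi
  -- ### basic g lemmas
  have g0 : ∀ y : V, g 0 y = 0 := by
    intro y; rw [← zero_smul ℝ (0 : V), hgsmul, zero_mul]
  have g0' : ∀ y : V, g y 0 = 0 := fun y => by rw [hgsymm]; exact g0 y
  have gadd2 : ∀ x y y' : V, g x (y + y') = g x y + g x y' := by
    intro x y y'; rw [hgsymm, hgadd, hgsymm y x, hgsymm y' x]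
  have gsmul2 : ∀ (r : ℝ) (x y : V), g x (r • y) = r * g x y := by
    intro r x y; rw [hgsymm, hgsmul, hgsymm]
  have gsub1 : ∀ x y z : V, g (x - y) z = g x z - g y z := by
    intro x y z
    rw [sub_eq_add_neg, ← neg_one_smul ℝ y, hgadd, hgsmul]; ring
  have gsub2 : ∀ x y z : V, g x (y - z) = g x y - g x z := by
    intro x y z; rw [hgsymm, gsub1, hgsymm y x, hgsymm z x]
  have gsum1 : ∀ {ι : Type} (t : Finset ι) (f : ι → V) (y : V),
      g (∑ i ∈ t, f i) y = ∑ i ∈ t, g (f i) y := by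
    intro ι t f y
    classical
    induction t using Finset.induction with
    | empty => simpa using g0 y
    | insert _ _ hx ih => rename_i a s; rw [Finset.sum_insert hx, hgadd, ih, Finset.sum_insert hx]
  -- ### repr formula and resolution of identity
  have hrepr : ∀ (x : V) (j : Fin n), g x (b j) = b.repr x j * ε j := by
    intro x j
    conv_lhs => rw [← b.sum_repr x]
    rw [gsum1]
    rw [Finset.sum_eq_single j]
    · rw [hgsmul, hgb, if_pos rfl]
    · intro i _ hij; rw [hgsmul, hgb, if_neg hij, mul_zero]
    · intro h; exact absurd (Finset.mem_univ j) h
  have hgnull : ∀ x : V, (∀ i, g x (b i) = 0) → x = 0 := by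
    intro x hx
    have h0 : ∀ j, b.repr x j = 0 := by
      intro j
      have h := hrepr x j
      rw [hx j] at h
      rcases hε j with h1 | h1 <;> rw [h1] at h <;> linarith
    rw [← b.sum_repr x]
    simp [h0]
  have hres : ∀ x y : V, ∑ i, ε i * (g x (b i) * g y (b i)) = g x y := by
    intro x y
    have hx : g x y = ∑ i, b.repr x i * (b.repr y i * ε i) := by
      conv_lhs => rw [← b.sum_repr x]
      rw [gsum1]
      exact Finset.sum_congr rfl fun i _ => by rw [hgsmul, hgsymm, hrepr]
    rw [hx]
    apply Finset.sum_congr rfl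
    intro i _
    rw [hrepr, hrepr]
    rcases hε i with h1 | h1 <;> rw [h1] <;> ring
  -- ### W multilinearity lemmas
  have Wz1 : ∀ c d e, W 0 c d e = 0 := by
    intro c d e; rw [← zero_smul ℝ (0 : V), hWs, zero_mul]
  have Wa2 : ∀ a c c' d e, W a (c + c') d e = W a c d e + W a c' d e := by
    intro a c c' d e
    rw [hA1 a (c + c'), hWa, hA1 a c, hA1 a c']; ring
  have Ws2 : ∀ (r : ℝ) (a c d e : V), W a (r • c) d e = r * W a c d e := by
    intro r a c d e
    rw [hA1 a (r • c), hWs, hA1 a c]; ring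
  have Wa3 : ∀ a c d d' e, W a c (d + d') e = W a c d e + W a c d' e := by
    intro a c d d' e
    rw [hPr a c (d + d') e, hWa, ← hPr a c d e, ← hPr a c d' e]
  have Ws3 : ∀ (r : ℝ) (a c d e : V), W a c (r • d) e = r * W a c d e := by
    intro r a c d e
    rw [hPr a c (r • d) e, hWs, ← hPr a c d e]
  have Wa4 : ∀ a c d e e', W a c d (e + e') = W a c d e + W a c d e' := by
    intro a c d e e'
    rw [hA2 a c d (e + e'), Wa3, hA2 a c d e, hA2 a c d e']; ring
  have Ws4 : ∀ (r : ℝ) (a c d e : V), W a c d (r • e) = r * W a c d e := by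
    intro r a c d e
    rw [hA2 a c d (r • e), Ws3, hA2 a c d e]; ring
  have Wz2 : ∀ a d e, W a 0 d e = 0 := by
    intro a d e; rw [← zero_smul ℝ (0 : V), Ws2, zero_mul]
  have Wz3 : ∀ a c e, W a c 0 e = 0 := by
    intro a c e; rw [← zero_smul ℝ (0 : V), Ws3, zero_mul]
  have Wz4 : ∀ a c d, W a c d 0 = 0 := by
    intro a c d; rw [← zero_smul ℝ (0 : V), Ws4, zero_mul]
  have Wsum1 : ∀ {ι : Type} (t : Finset ι) (f : ι → V) (c d e : V),
      W (∑ i ∈ t, f i) c d e = ∑ i ∈ t, W (f i) c d e := by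
    intro ι t f c d e
    classical
    induction t using Finset.induction with
    | empty => simpa using Wz1 c d e
    | insert _ _ hx ih => rename_i a s; rw [Finset.sum_insert hx, hWa, ih, Finset.sum_insert hx]
  have Wsum3 : ∀ {ι : Type} (t : Finset ι) (f : ι → V) (a c e : V),
      W a c (∑ i ∈ t, f i) e = ∑ i ∈ t, W a c (f i) e := by
    intro ι t f a c e
    classical
    induction t using Finset.induction with
    | empty => simpa using Wz3 a c e
    | insert _ _ hx ih => rename_i j s; rw [Finset.sum_insert hx, Wa3, ih, Finset.sum_insert hx]
  -- ### kernel lemmas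
  have k3 : ∀ i a c d, W a c (v i) d = 0 := by
    intro i a c d; rw [hA2, hker, neg_zero]
  have k1 : ∀ i c d e, W (v i) c d e = 0 := by
    intro i c d e; rw [hPr, k3]
  have k2 : ∀ i a d e, W a (v i) d e = 0 := by
    intro i a d e; rw [hA1, k1, neg_zero]
  -- ### projection
  set Pf : V → V := fun x => x - ∑ j, (δ j * g x (v j)) • v j with hPfdef
  have hPfval : ∀ x, Pf x = x - ∑ j, (δ j * g x (v j)) • v j := fun x => rfl
  have hsubPf : ∀ x, x - Pf x = ∑ j, (δ j * g x (v j)) • v j := by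
    intro x; rw [hPfval, sub_sub_cancel]
  have hgP : ∀ (x : V) (j : Fin (n - 3)), g (Pf x) (v j) = 0 := by
    intro x j
    rw [hPfval, gsub1, gsum1]
    rw [Finset.sum_eq_single j]
    · rw [hgsmul, horth, if_pos rfl]
      rcases hδ j with h1 | h1 <;> rw [h1] <;> ring
    · intro i _ hij; rw [hgsmul, horth, if_neg hij, mul_zero]
    · intro h; exact absurd (Finset.mem_univ j) h
  have hWP1 : ∀ a c d e, W a c d e = W (Pf a) c d e := by
    intro a c d e
    have ha : a = Pf a + ∑ j, (δ j * g a (v j)) • v j := by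
      rw [hPfval]; abel
    conv_lhs => rw [ha]
    rw [hWa, Wsum1]
    have h0 : ∀ j : Fin (n - 3), j ∈ Finset.univ →
        W ((δ j * g a (v j)) • v j) c d e = 0 := by
      intro j _; rw [hWs, k1, mul_zero]
    rw [Finset.sum_congr rfl h0, Finset.sum_const_zero, add_zero]
  have hWP3 : ∀ a c d e, W a c d e = W a c (Pf d) e := by
    intro a c d e
    rw [hPr a c d e, hWP1, ← hPr a c (Pf d) e]
  -- ### submodules
  let Umod : Submodule ℝ V :=
    { carrier := { x | ∀ j, g x (v j) = 0 }
      add_mem' := fun {x y} hx hy j => by rw [hgadd, hx j, hy j, add_zero]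
      zero_mem' := fun j => g0 _
      smul_mem' := fun r x hx j => by rw [hgsmul, hx j, mul_zero] }
  have hUmem : ∀ x : V, x ∈ Umod ↔ ∀ j, g x (v j) = 0 := fun x => Iff.rfl
  set Smod : Submodule ℝ V := Submodule.span ℝ (Set.range v) with hSdef
  have hPfU : ∀ x, Pf x ∈ Umod := fun x => (hUmem _).2 fun j => hgP x j
  have hPfS : ∀ x, x - Pf x ∈ Smod := by
    intro x
    rw [hsubPf]
    exact Submodule.sum_mem _ fun j _ =>
      Submodule.smul_mem _ _ (Submodule.subset_span ⟨j, rfl⟩)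
  have hPfid : ∀ x ∈ Umod, Pf x = x := by
    intro x hx
    rw [hPfval]
    have h0 : ∀ j : Fin (n - 3), j ∈ Finset.univ →
        (δ j * g x (v j)) • v j = 0 := by
      intro j _; rw [(hUmem x).1 hx j, mul_zero, zero_smul]
    rw [Finset.sum_congr rfl h0, Finset.sum_const_zero, sub_zero]
  have Pfadd : ∀ x y, Pf (x + y) = Pf x + Pf y := by
    intro x y
    rw [hPfval, hPfval, hPfval]
    have h0 : ∀ j : Fin (n - 3), j ∈ Finset.univ →
        (δ j * g (x + y) (v j)) • v j
          = (δ j * g x (v j)) • v j + (δ j * g y (v j)) • v j := by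
      intro j _; rw [hgadd, mul_add, add_smul]
    rw [Finset.sum_congr rfl h0, Finset.sum_add_distrib]
    abel
  have Pfsmul : ∀ (r : ℝ) (x : V), Pf (r • x) = r • Pf x := by
    intro r x
    rw [hPfval, hPfval]
    have h0 : ∀ j : Fin (n - 3), j ∈ Finset.univ →
        (δ j * g (r • x) (v j)) • v j = r • ((δ j * g x (v j)) • v j) := by
      intro j _; rw [hgsmul, smul_smul, mul_left_comm]
    rw [Finset.sum_congr rfl h0, ← Finset.smul_sum, smul_sub]
  have hPf0 : Pf 0 = 0 := by
    rw [hPfval]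
    have h0 : ∀ j : Fin (n - 3), j ∈ Finset.univ →
        (δ j * g (0 : V) (v j)) • v j = 0 := by
      intro j _; rw [g0, mul_zero, zero_smul]
    rw [Finset.sum_congr rfl h0, Finset.sum_const_zero, sub_zero]
  have hPfS0 : ∀ x ∈ Smod, Pf x = 0 := by
    intro x hx
    induction hx using Submodule.span_induction with
    | mem y hy =>
      obtain ⟨j, rfl⟩ := hy
      rw [hPfval]
      rw [Finset.sum_eq_single j]
      · rw [horth, if_pos rfl]
        rcases hδ j with h1 | h1 <;> rw [h1] <;> simp
      · intro i _ hij
        rw [horth, if_neg (fun h => hij h.symm), mul_zero, zero_smul]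
      · intro h; exact absurd (Finset.mem_univ j) h
    | zero => exact hPf0
    | add x y hx hy ihx ihy => rw [Pfadd, ihx, ihy, add_zero]
    | smul r x hx ihx => rw [Pfsmul, ihx, smul_zero]
  -- ### dimension count
  haveI : FiniteDimensional ℝ V := Module.Basis.finiteDimensional_of_finite b
  have hlinv : LinearIndependent ℝ v := by
    rw [Fintype.linearIndependent_iff]
    intro c hc k
    have h := congrArg (fun z => g z (v k)) hc
    simp only [g0] at h
    rw [gsum1] at h
    have h2 : ∀ j : Fin (n - 3), j ∈ Finset.univ →
        g (c j • v j) (v k) = if k = j then c k * δ k else 0 := by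
      intro j _
      rw [hgsmul, horth]
      by_cases hjk : j = k
      · subst hjk; rw [if_pos rfl, if_pos rfl]
      · rw [if_neg hjk, if_neg (fun h => hjk h.symm), mul_zero]
    rw [Finset.sum_congr rfl h2, Finset.sum_ite_eq] at h
    simp only [Finset.mem_univ, if_true] at h
    rcases hδ k with h1 | h1 <;> rw [h1] at h <;> linarith
  have hrankV : Module.finrank ℝ V = n := by
    rw [Module.finrank_eq_card_basis b, Fintype.card_fin]
  have hrankS : Module.finrank ℝ Smod = n - 3 := by
    rw [hSdef, finrank_span_eq_card hlinv, Fintype.card_fin]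
  have htop : Smod ⊔ Umod = ⊤ := by
    rw [eq_top_iff]
    intro x _
    have hx : x = (x - Pf x) + Pf x := by abel
    rw [hx]
    exact Submodule.add_mem _ (Submodule.mem_sup_left (hPfS x))
      (Submodule.mem_sup_right (hPfU x))
  have hbot : Smod ⊓ Umod = ⊥ := by
    rw [eq_bot_iff]
    rintro x ⟨hxS, hxU⟩
    have h1 : Pf x = x := hPfid x hxU
    have h2 : Pf x = 0 := hPfS0 x hxS
    rw [Submodule.mem_bot, ← h1, h2]
  have hrankU : Module.finrank ℝ Umod = 3 := by
    have h := Submodule.finrank_sup_add_finrank_inf_eq Smod Umod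
    rw [htop, hbot, finrank_top, finrank_bot, hrankV, hrankS, add_zero] at h
    omega
  -- ### orthogonal basis of U
  let gU : LinearMap.BilinForm ℝ Umod :=
    LinearMap.mk₂ ℝ (fun x y : Umod => g x y)
      (fun x x' y => hgadd x x' y)
      (fun r x y => hgsmul r x y)
      (fun x y y' => gadd2 x y y')
      (fun r x y => gsmul2 r x y)
  have hgUval : ∀ x y : Umod, gU x y = g x y := fun x y => rfl
  have hgUsymm : LinearMap.IsSymm gU := by
    constructor
    intro x y
    rw [RingHom.id_apply, hgUval, hgUval, hgsymm]
  haveI : Invertible (2 : ℝ) := invertibleOfNonzero two_ne_zero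
  obtain ⟨u0, hu0⟩ := LinearMap.BilinForm.exists_orthogonal_basis hgUsymm
  let u : Module.Basis (Fin 3) ℝ Umod := u0.reindex (finCongr hrankU)
  set uu : Fin 3 → V := fun p => (u p : V) with huudef
  have hortho : ∀ p q : Fin 3, p ≠ q → g (uu p) (uu q) = 0 := by
    intro p q hpq
    have h := hu0 (show (finCongr hrankU).symm p ≠ (finCongr hrankU).symm q from
      fun h => hpq (by simpa using congrArg (finCongr hrankU) h))
    have hup : u p = u0 ((finCongr hrankU).symm p) := u0.reindex_apply _ _
    have huq : u q = u0 ((finCongr hrankU).symm q) := u0.reindex_apply _ _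
    have hval := hgUval (u p) (u q)
    rw [huudef]
    simp only
    rw [← hval, hup, huq]
    exact h
  set lam : Fin 3 → ℝ := fun p => g (uu p) (uu p) with hlamdef
  have huumem : ∀ p, uu p ∈ Umod := fun p => (u p).2
  have hspanU : Submodule.span ℝ (Set.range uu) = Umod := by
    have h1 : Set.range uu = Umod.subtype '' Set.range u := by
      rw [← Set.range_comp]; rfl
    rw [h1, ← Submodule.map_span, u.span_eq, Submodule.map_top,
      Submodule.range_subtype]
  have hperpS : ∀ (p : Fin 3), ∀ s ∈ Smod, g (uu p) s = 0 := by
    intro p s hs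
    induction hs using Submodule.span_induction with
    | mem y hy =>
      obtain ⟨j, rfl⟩ := hy
      exact (hUmem _).1 (huumem p) j
    | zero => exact g0' _
    | add x y hx hy ihx ihy => rw [gadd2, ihx, ihy, add_zero]
    | smul r x hx ihx => rw [gsmul2, ihx, mul_zero]
  have hlamne : ∀ p, lam p ≠ 0 := by
    intro p hp0
    have hU0 : ∀ w ∈ Umod, g (uu p) w = 0 := by
      intro w hw
      rw [← hspanU] at hw
      induction hw using Submodule.span_induction with
      | mem y hy =>
        obtain ⟨q, rfl⟩ := hy
        by_cases hq : p = q
        · subst hq; exact hp0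
        · exact hortho p q hq
      | zero => exact g0' _
      | add x y hx hy ihx ihy => rw [gadd2, ihx, ihy, add_zero]
      | smul r x hx ihx => rw [gsmul2, ihx, mul_zero]
    have huuz : uu p = 0 := by
      apply hgnull
      intro i
      have hbi : b i = (b i - Pf (b i)) + Pf (b i) := by abel
      rw [hbi, gadd2, hperpS p _ (hPfS (b i)), hU0 _ (hPfU (b i)), add_zero]
    exact u.ne_zero p (by apply Subtype.ext; show uu p = _; rw [huuz]; simp)
  have hinv : ∀ p, (lam p)⁻¹ ≠ 0 := fun p => inv_ne_zero (hlamne p)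
  -- ### expansion in the U-basis
  have hexp : ∀ w ∈ Umod, w = ∑ p, ((lam p)⁻¹ * g (uu p) w) • uu p := by
    intro w hw
    rw [← hspanU] at hw
    induction hw using Submodule.span_induction with
    | mem y hy =>
      obtain ⟨q, rfl⟩ := hy
      rw [Finset.sum_eq_single q]
      · rw [hlamdef]
        simp only
        rw [inv_mul_cancel₀ (hlamne q), one_smul]
      · intro p _ hpq
        rw [hortho p q hpq, mul_zero, zero_smul]
      · intro h; exact absurd (Finset.mem_univ q) h
    | zero =>
      have h0 : ∀ p : Fin 3, p ∈ Finset.univ →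
          ((lam p)⁻¹ * g (uu p) (0 : V)) • uu p = 0 := by
        intro p _; rw [g0', mul_zero, zero_smul]
      rw [Finset.sum_congr rfl h0, Finset.sum_const_zero]
    | add x y hx hy ihx ihy =>
      have h0 : ∀ p : Fin 3, p ∈ Finset.univ →
          ((lam p)⁻¹ * g (uu p) (x + y)) • uu p
            = ((lam p)⁻¹ * g (uu p) x) • uu p + ((lam p)⁻¹ * g (uu p) y) • uu p := by
        intro p _; rw [gadd2, mul_add, add_smul]
      rw [Finset.sum_congr rfl h0, Finset.sum_add_distrib]
      exact congrArg₂ (· + ·) ihx ihy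
    | smul r x hx ihx =>
      have h0 : ∀ p : Fin 3, p ∈ Finset.univ →
          ((lam p)⁻¹ * g (uu p) (r • x)) • uu p
            = r • (((lam p)⁻¹ * g (uu p) x) • uu p) := by
        intro p _; rw [gsmul2, smul_smul, mul_left_comm]
      rw [Finset.sum_congr rfl h0, ← Finset.smul_sum]
      exact congrArg (r • ·) ihx
  -- ### coefficients and projected basis expansion
  set cc : Fin n → Fin 3 → ℝ := fun i p => (lam p)⁻¹ * g (uu p) (b i) with hccdef
  have hgPb : ∀ (p : Fin 3) (i : Fin n), g (uu p) (Pf (b i)) = g (uu p) (b i) := by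
    intro p i
    have h1 : Pf (b i) = b i - (b i - Pf (b i)) := by abel
    rw [h1, gsub2, hperpS p _ (hPfS (b i)), sub_zero]
  have hPb : ∀ i : Fin n, Pf (b i) = ∑ p, cc i p • uu p := by
    intro i
    have h := hexp (Pf (b i)) (hPfU (b i))
    rw [h]
    apply Finset.sum_congr rfl
    intro p _
    rw [hgPb]
  have hD : ∀ p r : Fin 3, ∑ i, ε i * (cc i p * cc i r)
      = if p = r then (lam p)⁻¹ else 0 := by
    intro p r
    have h1 : ∑ i, ε i * (cc i p * cc i r)
        = ((lam p)⁻¹ * (lam r)⁻¹) * ∑ i, ε i * (g (uu p) (b i) * g (uu r) (b i)) := by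
      rw [Finset.mul_sum]
      apply Finset.sum_congr rfl
      intro i _
      rw [hccdef]
      ring
    rw [h1, hres]
    by_cases hpr : p = r
    · subst hpr
      rw [if_pos rfl]
      have : lam p ≠ 0 := hlamne p
      field_simp
      rfl
    · rw [if_neg hpr, hortho p r hpr, mul_zero]
  -- ### trace on U
  have htrU : ∀ q s : Fin 3,
      ∑ p, (lam p)⁻¹ * W (uu p) (uu q) (uu p) (uu s) = 0 := by
    intro q s
    have hterm : ∀ i : Fin n, ε i * W (b i) (uu q) (b i) (uu s)
        = ∑ p, ∑ r, (ε i * (cc i p * cc i r)) * W (uu p) (uu q) (uu r) (uu s) := by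
      intro i
      rw [hWP1 (b i) (uu q) (b i) (uu s), hWP3 (Pf (b i)) (uu q) (b i) (uu s),
        hPb i, Wsum1, Finset.mul_sum]
      apply Finset.sum_congr rfl
      intro p _
      rw [hWs, Wsum3]
      simp only [Finset.mul_sum]
      apply Finset.sum_congr rfl
      intro r _
      rw [Ws3]
      ring
    calc ∑ p, (lam p)⁻¹ * W (uu p) (uu q) (uu p) (uu s)
        = ∑ p, ∑ r, ((if p = r then (lam p)⁻¹ else 0) * W (uu p) (uu q) (uu r) (uu s)) := by
          apply Finset.sum_congr rfl
          intro p _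
          rw [Finset.sum_eq_single p]
          · rw [if_pos rfl]
          · intro r _ hrp
            rw [if_neg (fun h => hrp h.symm), zero_mul]
          · intro h; exact absurd (Finset.mem_univ p) h
      _ = ∑ p, ∑ r, ((∑ i, ε i * (cc i p * cc i r)) * W (uu p) (uu q) (uu r) (uu s)) := by
          apply Finset.sum_congr rfl; intro p _
          apply Finset.sum_congr rfl; intro r _
          rw [hD]
      _ = ∑ p, ∑ r, ∑ i, (ε i * (cc i p * cc i r)) * W (uu p) (uu q) (uu r) (uu s) := by
          apply Finset.sum_congr rfl; intro p _
          apply Finset.sum_congr rfl; intro r _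
          rw [Finset.sum_mul]
      _ = ∑ p, ∑ i, ∑ r, (ε i * (cc i p * cc i r)) * W (uu p) (uu q) (uu r) (uu s) :=
          Finset.sum_congr rfl fun p _ => Finset.sum_comm
      _ = ∑ i, ∑ p, ∑ r, (ε i * (cc i p * cc i r)) * W (uu p) (uu q) (uu r) (uu s) :=
          Finset.sum_comm
      _ = ∑ i, ε i * W (b i) (uu q) (b i) (uu s) :=
          Finset.sum_congr rfl fun i _ => (hterm i).symm
      _ = 0 := hTr _ _
  -- ### diagonal and flip lemmas
  have Wd12 : ∀ a d e : V, W a a d e = 0 := by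
    intro a d e; have h := hA1 a a d e; linarith
  have Wd34 : ∀ a c d : V, W a c d d = 0 := by
    intro a c d; have h := hA2 a c d d; linarith
  have flip : ∀ a c d e : V, W a c d e = W c a e d := by
    intro a c d e; rw [hA1 a c d e, hA2 c a d e, neg_neg]
  -- ### the six core components vanish
  have E : ∀ q s : Fin 3,
      (lam 0)⁻¹ * W (uu 0) (uu q) (uu 0) (uu s)
        + (lam 1)⁻¹ * W (uu 1) (uu q) (uu 1) (uu s)
        + (lam 2)⁻¹ * W (uu 2) (uu q) (uu 2) (uu s) = 0 := by
    intro q s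
    have h := htrU q s
    rwa [Fin.sum_univ_three] at h
  have e1 : (lam 1)⁻¹ * W (uu 0) (uu 1) (uu 0) (uu 1)
      + (lam 2)⁻¹ * W (uu 0) (uu 2) (uu 0) (uu 2) = 0 := by
    have h := E 0 0
    rw [Wd12, flip (uu 1) (uu 0) (uu 1) (uu 0), flip (uu 2) (uu 0) (uu 2) (uu 0)] at h
    linarith
  have e2 : (lam 0)⁻¹ * W (uu 0) (uu 1) (uu 0) (uu 1)
      + (lam 2)⁻¹ * W (uu 1) (uu 2) (uu 1) (uu 2) = 0 := by
    have h := E 1 1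
    rw [Wd12, flip (uu 2) (uu 1) (uu 2) (uu 1)] at h
    linarith
  have e3 : (lam 0)⁻¹ * W (uu 0) (uu 2) (uu 0) (uu 2)
      + (lam 1)⁻¹ * W (uu 1) (uu 2) (uu 1) (uu 2) = 0 := by
    have h := E 2 2
    rw [Wd12] at h
    linarith
  have hz : W (uu 1) (uu 2) (uu 1) (uu 2) = 0 := by
    have h2z : ((lam 1)⁻¹ * (lam 2)⁻¹) * W (uu 1) (uu 2) (uu 1) (uu 2) = 0 := by
      linear_combination (-(lam 0)⁻¹ / 2) * e1 + ((lam 1)⁻¹ / 2) * e2 + ((lam 2)⁻¹ / 2) * e3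
    exact (mul_eq_zero.mp h2z).resolve_left (mul_ne_zero (hinv 1) (hinv 2))
  have hxv : W (uu 0) (uu 1) (uu 0) (uu 1) = 0 := by
    rw [hz, mul_zero, add_zero] at e2
    exact (mul_eq_zero.mp e2).resolve_left (hinv 0)
  have hyv : W (uu 0) (uu 2) (uu 0) (uu 2) = 0 := by
    rw [hz, mul_zero, add_zero] at e3
    exact (mul_eq_zero.mp e3).resolve_left (hinv 0)
  have hm3 : W (uu 0) (uu 2) (uu 1) (uu 2) = 0 := by
    have h := E 0 1
    rw [Wd12, Wd34] at h
    have h2 : (lam 2)⁻¹ * W (uu 2) (uu 0) (uu 2) (uu 1) = 0 := by linarith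
    have h3 := (mul_eq_zero.mp h2).resolve_left (hinv 2)
    rw [flip (uu 0) (uu 2) (uu 1) (uu 2)]
    exact h3
  have hm2 : W (uu 0) (uu 1) (uu 1) (uu 2) = 0 := by
    have h := E 0 2
    rw [Wd12, Wd34] at h
    have h2 : (lam 1)⁻¹ * W (uu 1) (uu 0) (uu 1) (uu 2) = 0 := by linarith
    have h3 := (mul_eq_zero.mp h2).resolve_left (hinv 1)
    rw [hA1 (uu 0) (uu 1) (uu 1) (uu 2), h3, neg_zero]
  have hm1 : W (uu 0) (uu 1) (uu 0) (uu 2) = 0 := by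
    have h := E 1 2
    rw [Wd12, Wd34] at h
    have h2 : (lam 0)⁻¹ * W (uu 0) (uu 1) (uu 0) (uu 2) = 0 := by linarith
    exact (mul_eq_zero.mp h2).resolve_left (hinv 0)
  -- ### all components on U vanish
  have main : ∀ p q r s : Fin 3, p < q → r < s → W (uu p) (uu q) (uu r) (uu s) = 0 := by
    intro p q r s hpq hrs
    fin_cases p <;> fin_cases q <;> fin_cases r <;> fin_cases s <;>
      first
        | exact absurd hpq (by decide)
        | exact absurd hrs (by decide)
        | exact hxv
        | exact hyv
        | exact hz
        | exact hm1
        | exact hm2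
        | exact hm3
        | (rw [hPr]; first | exact hm1 | exact hm2 | exact hm3)
  have hcompU : ∀ p q r s : Fin 3, W (uu p) (uu q) (uu r) (uu s) = 0 := by
    intro p q r s
    rcases eq_or_ne p q with h1 | h1
    · subst h1; exact Wd12 _ _ _
    rcases eq_or_ne r s with h2 | h2
    · subst h2; exact Wd34 _ _ _
    rcases h1.lt_or_gt with h1 | h1 <;> rcases h2.lt_or_gt with h2 | h2
    · exact main p q r s h1 h2
    · rw [hA2, main p q s r h1 h2, neg_zero]
    · rw [hA1, main q p r s h1 h2, neg_zero]
    · rw [hA1, hA2 (uu q) (uu p) (uu r) (uu s), neg_neg, main q p s r h1 h2]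
  -- ### spanning set and final四 inductions
  set SS : Set V := Set.range v ∪ Set.range uu with hSSdef
  have hspanT : Submodule.span ℝ SS = ⊤ := by
    rw [hSSdef, Submodule.span_union, hspanU, ← hSdef, htop]
  have hmem : ∀ x : V, x ∈ Submodule.span ℝ SS := fun x => by rw [hspanT]; trivial
  have hbase : ∀ a ∈ SS, ∀ c ∈ SS, ∀ d ∈ SS, ∀ e ∈ SS, W a c d e = 0 := by
    rintro a (⟨i, rfl⟩ | ⟨p, rfl⟩) c hc d hd e he
    · exact k1 i c d e
    rcases hc with ⟨i, rfl⟩ | ⟨q, rfl⟩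
    · exact k2 i _ d e
    rcases hd with ⟨i, rfl⟩ | ⟨r, rfl⟩
    · exact k3 i _ _ e
    rcases he with ⟨i, rfl⟩ | ⟨s, rfl⟩
    · exact hker i _ _ _
    · exact hcompU p q r s
  have st4 : ∀ a ∈ SS, ∀ c ∈ SS, ∀ d ∈ SS, ∀ e, W a c d e = 0 := by
    intro a ha c hc d hd e
    have he := hmem e
    induction he using Submodule.span_induction with
    | mem y hy => exact hbase a ha c hc d hd y hy
    | zero => exact Wz4 _ _ _
    | add x y hx hy ihx ihy => rw [Wa4, ihx, ihy, add_zero]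
    | smul r x hx ihx => rw [Ws4, ihx, mul_zero]
  have st3 : ∀ a ∈ SS, ∀ c ∈ SS, ∀ d e, W a c d e = 0 := by
    intro a ha c hc d e
    have hd := hmem d
    induction hd using Submodule.span_induction with
    | mem y hy => exact st4 a ha c hc y hy e
    | zero => exact Wz3 _ _ _
    | add x y hx hy ihx ihy => rw [Wa3, ihx, ihy, add_zero]
    | smul r x hx ihx => rw [Ws3, ihx, mul_zero]
  have st2 : ∀ a ∈ SS, ∀ c d e, W a c d e = 0 := by
    intro a ha c d e
    have hc := hmem c
    induction hc using Submodule.span_induction with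
    | mem y hy => exact st3 a ha y hy d e
    | zero => exact Wz2 _ _ _
    | add x y hx hy ihx ihy => rw [Wa2, ihx, ihy, add_zero]
    | smul r x hx ihx => rw [Ws2, ihx, mul_zero]
  intro a c d e
  have ha := hmem a
  induction ha using Submodule.span_induction with
  | mem y hy => exact st2 y hy c d e
  | zero => exact Wz1 _ _ _
  | add x y hx hy ihx ihy => rw [hWa, ihx, ihy, add_zero]
  | smul r x hx ihx => rw [hWs, ihx, mul_zero]
end

section
/- Let V be an n-dimensional real vector space with a positive definite inner product g, and let W be a nonzero Weyl-type tensor on V. Then the kernel of W, namely ker W = {v ∈ V : W(a,b,c,v) = 0 for all a,b,c ∈ V}, has dimension at most n-4. -/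
open scoped RealInnerProductSpace

lemma weyl_components_vanish {k : ℕ} (hk : k ≤ 3) (w : Fin k → Fin k → Fin k → Fin k → ℝ)
    (anti1 : ∀ i j l m, w i j l m = - w j i l m)
    (anti2 : ∀ i j l m, w i j l m = - w i j m l)
    (tr : ∀ j m, ∑ i, w i j i m = 0) :
    ∀ i j l m, w i j l m = 0 := by
  have diag1 : ∀ i l m, w i i l m = 0 := by
    intro i l m; have := anti1 i i l m; linarith
  have diag2 : ∀ i j l, w i j l l = 0 := by
    intro i j l; have := anti2 i j l l; linarith
  -- Lemma A
  have lemA : ∀ a b c : Fin k, a ≠ b → a ≠ c → b ≠ c → w a b a c = 0 := by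
    intro a b c hab hac hbc
    have huniv : (Finset.univ : Finset (Fin k)) = {a, b, c} := by
      apply (Finset.eq_of_subset_of_card_le (Finset.subset_univ _) ?_).symm
      have hcard : ({a, b, c} : Finset (Fin k)).card = 3 := by
        rw [Finset.card_insert_of_notMem (by simp [hab, hac]),
          Finset.card_insert_of_notMem (by simp [hbc]), Finset.card_singleton]
      rw [hcard, Finset.card_univ, Fintype.card_fin]; exact hk
    have h := tr b c
    rw [huniv, Finset.sum_insert (by simp [hab, hac]),
      Finset.sum_insert (by simp [hbc]), Finset.sum_singleton] at h
    rw [diag1 b b c, diag2 c b c] at h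
    linarith
  -- Lemma B
  have lemB : ∀ a b : Fin k, a ≠ b → w a b a b = 0 := by
    intro a b hab
    by_cases hc : ∃ c : Fin k, c ≠ a ∧ c ≠ b
    · obtain ⟨c, hca, hcb⟩ := hc
      have huniv : (Finset.univ : Finset (Fin k)) = {a, b, c} := by
        apply (Finset.eq_of_subset_of_card_le (Finset.subset_univ _) ?_).symm
        have hcard : ({a, b, c} : Finset (Fin k)).card = 3 := by
          rw [Finset.card_insert_of_notMem (by simp [hab, Ne.symm hca]),
            Finset.card_insert_of_notMem (by simp [Ne.symm hcb]), Finset.card_singleton]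
        rw [hcard, Finset.card_univ, Fintype.card_fin]; exact hk
      have sum3 : ∀ j m, w a j a m + (w b j b m + w c j c m) = 0 := by
        intro j m
        have h := tr j m
        rwa [huniv, Finset.sum_insert (by simp [hab, Ne.symm hca]),
          Finset.sum_insert (by simp [Ne.symm hcb]), Finset.sum_singleton] at h
      have t1 := sum3 b b
      have t2 := sum3 a a
      have t3 := sum3 c c
      rw [diag1 b b b] at t1
      rw [diag1 a a a] at t2
      rw [diag1 c c c] at t3
      have e1 : w c b c b = w b c b c := by rw [anti1 c b c b, anti2 b c c b]; ring_nf
      have e2 : w b a b a = w a b a b := by rw [anti1 b a b a, anti2 a b b a]; ring_nf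
      have e3 : w c a c a = w a c a c := by rw [anti1 c a c a, anti2 a c c a]; ring_nf
      linarith
    · push_neg at hc
      have huniv : (Finset.univ : Finset (Fin k)) = {a, b} := by
        refine (Finset.eq_univ_of_forall ?_).symm
        intro i
        by_cases ha : i = a
        · simp [ha]
        · simp [hc i ha]
      have h := tr b b
      rw [huniv, Finset.sum_insert (by simp [hab]), Finset.sum_singleton, diag1 b b b] at h
      linarith
  -- main case analysis
  intro i j l m
  by_cases hij : i = j
  · rw [hij]; exact diag1 _ _ _
  by_cases hlm : l = m
  · rw [hlm]; exact diag2 _ _ _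
  by_cases hil : i = l
  · rw [← hil]
    by_cases hjm : j = m
    · rw [← hjm]; exact lemB i j hij
    · refine lemA i j m hij ?_ hjm
      rw [hil]; exact hlm
  by_cases him : i = m
  · rw [← him, anti2 i j l i]
    by_cases hjl : j = l
    · rw [← hjl, lemB i j hij]; ring
    · rw [lemA i j l hij hil hjl]; ring
  by_cases hjl : j = l
  · rw [← hjl, anti1 i j j m]
    have hjm : j ≠ m := by rw [hjl]; exact hlm
    rw [lemA j i m (Ne.symm hij) hjm him]; ring
  by_cases hjm : j = m
  · rw [← hjm, anti2 i j l j, anti1 i j j l]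
    rw [lemA j i l (Ne.symm hij) hjl hil]; ring
  exfalso
  have hcard : ({i, j, l, m} : Finset (Fin k)).card = 4 := by
    rw [Finset.card_insert_of_notMem (by simp [hij, hil, him]),
      Finset.card_insert_of_notMem (by simp [hjl, hjm]),
      Finset.card_insert_of_notMem (by simp [hlm]), Finset.card_singleton]
  have h4 := Finset.card_le_univ ({i, j, l, m} : Finset (Fin k))
  rw [hcard] at h4
  simp only [Finset.card_univ, Fintype.card_fin] at h4
  omega


lemma weyl_euclid_zero {n m : ℕ}
    (W : EuclideanSpace ℝ (Fin n) → EuclideanSpace ℝ (Fin n) → EuclideanSpace ℝ (Fin n) →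
      EuclideanSpace ℝ (Fin n) → ℝ)
    (addW : ∀ a a' c d e, W (a + a') c d e = W a c d e + W a' c d e)
    (smulW : ∀ (r : ℝ) (a c d e), W (r • a) c d e = r * W a c d e)
    (anti1 : ∀ a c d e, W a c d e = - W c a d e)
    (anti2 : ∀ a c d e, W a c d e = - W a c e d)
    (pairW : ∀ a c d e, W a c d e = W d e a c)
    (trW : ∀ a c, ∑ i, W (EuclideanSpace.basisFun (Fin n) ℝ i) a
        (EuclideanSpace.basisFun (Fin n) ℝ i) c = 0)
    (vs : Fin m → EuclideanSpace ℝ (Fin n))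
    (hker0 : ∀ i a c d, W a c d (vs i) = 0)
    (hKrk : n - 3 ≤ Module.finrank ℝ (Submodule.span ℝ (Set.range vs))) :
    ∀ a c d e, W a c d e = 0 := by
  classical
  -- linearity in other slots
  have add2 : ∀ a c c' d e, W a (c + c') d e = W a c d e + W a c' d e := by
    intro a c c' d e
    rw [anti1 a (c + c') d e, addW, anti1 a c d e, anti1 a c' d e]; ring
  have add3 : ∀ a c d d' e, W a c (d + d') e = W a c d e + W a c d' e := by
    intro a c d d' e
    rw [pairW a c (d + d') e, addW, pairW a c d e, pairW a c d' e]
  have add4 : ∀ a c d e e', W a c d (e + e') = W a c d e + W a c d e' := by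
    intro a c d e e'
    rw [anti2 a c d (e + e'), add3, anti2 a c d e, anti2 a c d e']; ring
  have smul2 : ∀ (r : ℝ) (a c d e), W a (r • c) d e = r * W a c d e := by
    intro r a c d e
    rw [anti1 a (r • c) d e, smulW, anti1 a c d e]; ring
  have smul3 : ∀ (r : ℝ) (a c d e), W a c (r • d) e = r * W a c d e := by
    intro r a c d e
    rw [pairW a c (r • d) e, smulW, pairW a c d e]
  have smul4 : ∀ (r : ℝ) (a c d e), W a c d (r • e) = r * W a c d e := by
    intro r a c d e
    rw [anti2 a c d (r • e), smul3, anti2 a c d e]; ring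
  have zero1 : ∀ c d e, W 0 c d e = 0 := by
    intro c d e
    have := smulW 0 0 c d e
    simpa using this
  have zero4 : ∀ a c d, W a c d 0 = 0 := by
    intro a c d
    have := smul4 0 a c d 0
    simpa using this
  have zero2 : ∀ a d e, W a 0 d e = 0 := by
    intro a d e
    have := smul2 0 a 0 d e
    simpa using this
  -- the kernel submodule
  set K : Submodule ℝ (EuclideanSpace ℝ (Fin n)) := Submodule.span ℝ (Set.range vs) with hKdef
  have hker : ∀ x ∈ K, ∀ a c d, W a c d x = 0 := by
    intro x hx
    induction hx using Submodule.span_induction with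
    | mem y hy =>
      obtain ⟨i, rfl⟩ := hy
      exact fun a c d => hker0 i a c d
    | zero => exact fun a c d => zero4 a c d
    | add y z _ _ hy hz => exact fun a c d => by rw [add4, hy, hz]; ring
    | smul r y _ hy => exact fun a c d => by rw [smul4, hy]; ring
  have ker3 : ∀ x ∈ K, ∀ a c e, W a c x e = 0 := by
    intro x hx a c e
    rw [anti2 a c x e, hker x hx a c e]; ring
  have ker1 : ∀ x ∈ K, ∀ c d e, W x c d e = 0 := by
    intro x hx c d e
    rw [pairW x c d e]
    exact ker3 x hx d e c
  -- the orthogonal complement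
  have hfr : Module.finrank ℝ K + Module.finrank ℝ Kᗮ = n := by
    have := Submodule.finrank_add_finrank_orthogonal K
    rwa [finrank_euclideanSpace_fin] at this
  set k := Module.finrank ℝ Kᗮ with hkdef
  have hk3 : k ≤ 3 := by omega
  set ob := stdOrthonormalBasis ℝ (Kᗮ : Submodule ℝ (EuclideanSpace ℝ (Fin n))) with hob
  set e : Fin k → EuclideanSpace ℝ (Fin n) := fun j => (ob j : EuclideanSpace ℝ (Fin n)) with he
  have he_mem : ∀ j, e j ∈ Kᗮ := fun j => (ob j).2
  have he_on : ∀ j l, ⟪e j, e l⟫ = if j = l then (1 : ℝ) else 0 := by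
    intro j l
    have h := orthonormal_iff_ite.mp ob.orthonormal j l
    rwa [Submodule.coe_inner] at h
  have hKe : ∀ j, ∀ x ∈ K, ⟪e j, x⟫ = 0 := by
    intro j x hx
    rw [real_inner_comm]
    exact (Submodule.mem_orthogonal K (e j)).mp (he_mem j) x hx
  have hdec : ∀ x : EuclideanSpace ℝ (Fin n), ∃ u ∈ K, ∃ p ∈ Kᗮ, x = u + p := by
    intro x
    have hx : x ∈ K ⊔ Kᗮ := by
      rw [Submodule.sup_orthogonal_of_hasOrthogonalProjection]
      exact Submodule.mem_top
    rcases Submodule.mem_sup.mp hx with ⟨u, hu, p, hp, h⟩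
    exact ⟨u, hu, p, hp, h.symm⟩
  have hexp : ∀ p ∈ Kᗮ, ∃ r : Fin k → ℝ, p = ∑ j, r j • e j := by
    intro p hp
    refine ⟨fun j => ob.repr ⟨p, hp⟩ j, ?_⟩
    have h2 : ((∑ j, ob.repr ⟨p, hp⟩ j • ob j : Kᗮ) : EuclideanSpace ℝ (Fin n)) = p :=
      congrArg Subtype.val (ob.sum_repr ⟨p, hp⟩)
    refine Eq.symm ?_
    conv_rhs => rw [← h2]
    push_cast
    rfl
  -- sum expansion lemmas
  have sum1 : ∀ (s : Finset (Fin k)) (f : Fin k → EuclideanSpace ℝ (Fin n)) (c d e'),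
      W (∑ j ∈ s, f j) c d e' = ∑ j ∈ s, W (f j) c d e' := by
    intro s f c d e'
    induction s using Finset.induction_on with
    | empty => simpa using zero1 c d e'
    | insert _ _ hx ih => rw [Finset.sum_insert hx, Finset.sum_insert hx, addW, ih]
  have sum3 : ∀ (s : Finset (Fin k)) (f : Fin k → EuclideanSpace ℝ (Fin n)) (a c e'),
      W a c (∑ j ∈ s, f j) e' = ∑ j ∈ s, W a c (f j) e' := by
    intro s f a c e'
    rw [pairW, sum1]
    exact Finset.sum_congr rfl fun j _ => (pairW a c (f j) e').symm
  have sum2 : ∀ (s : Finset (Fin k)) (f : Fin k → EuclideanSpace ℝ (Fin n)) (a d e'),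
      W a (∑ j ∈ s, f j) d e' = ∑ j ∈ s, W a (f j) d e' := by
    intro s f a d e'
    induction s using Finset.induction_on with
    | empty => simpa using zero2 a d e'
    | insert _ _ hx ih => rw [Finset.sum_insert hx, Finset.sum_insert hx, add2, ih]
  have sum4 : ∀ (s : Finset (Fin k)) (f : Fin k → EuclideanSpace ℝ (Fin n)) (a c d),
      W a c d (∑ j ∈ s, f j) = ∑ j ∈ s, W a c d (f j) := by
    intro s f a c d
    induction s using Finset.induction_on with
    | empty => simpa using zero4 a c d
    | insert _ _ hx ih => rw [Finset.sum_insert hx, Finset.sum_insert hx, add4, ih]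
  -- trace transfer to the orthogonal complement
  have trP : ∀ a c, ∑ j, W (e j) a (e j) c = 0 := by
    intro a c
    choose u hu p hp hs using fun i => hdec (EuclideanSpace.basisFun (Fin n) ℝ i)
    choose r hr using fun i => hexp (p i) (hp i)
    -- coefficients are the coordinates of the basis vectors
    have hrel : ∀ i l, r i l = e l i := by
      intro i l
      have h1 : ⟪e l, p i⟫ = r i l := by
        rw [hr i, inner_sum]
        have : ∀ j, ⟪e l, r i j • e j⟫ = r i j * (if l = j then (1:ℝ) else 0) := by
          intro j
          rw [real_inner_smul_right, he_on l j]
        rw [Finset.sum_congr rfl fun j _ => this j]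
        simp
      have h2 : ⟪e l, EuclideanSpace.basisFun (Fin n) ℝ i⟫ = e l i := by
        rw [EuclideanSpace.basisFun_apply]
        have := EuclideanSpace.inner_single_right (𝕜 := ℝ) i (1 : ℝ) (e l)
        simpa using this
      rw [hs i, inner_add_right, hKe l (u i) (hu i), zero_add, h1] at h2
      exact h2
    have parseval : ∀ j l, ∑ i, r i j * r i l = if j = l then (1:ℝ) else 0 := by
      intro j l
      have : ∑ i, r i j * r i l = ⟪e j, e l⟫ := by
        rw [PiLp.inner_apply]
        refine Finset.sum_congr rfl fun i _ => ?_
        rw [hrel i j, hrel i l]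
        simp [RCLike.inner_apply]
        ring
      rw [this, he_on]
    have hstep : ∀ i, W (EuclideanSpace.basisFun (Fin n) ℝ i) a
        (EuclideanSpace.basisFun (Fin n) ℝ i) c
        = ∑ j, ∑ l, r i j * (r i l * W (e j) a (e l) c) := by
      intro i
      rw [hs i, addW, ker1 (u i) (hu i) a (u i + p i) c, zero_add,
        add3 (p i) a (u i) (p i) c, ker3 (u i) (hu i) (p i) a c, zero_add]
      rw [hr i, sum1]
      refine Finset.sum_congr rfl fun j _ => ?_
      rw [smulW, sum3]
      rw [Finset.mul_sum]
      refine Finset.sum_congr rfl fun l _ => ?_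
      rw [smul3]
    have h0 := trW a c
    rw [Finset.sum_congr rfl fun i _ => hstep i] at h0
    rw [Finset.sum_comm] at h0
    have hfin : ∀ j, (∑ i, ∑ l, r i j * (r i l * W (e j) a (e l) c)) = W (e j) a (e j) c := by
      intro j
      rw [Finset.sum_comm]
      have hl : ∀ l, (∑ i, r i j * (r i l * W (e j) a (e l) c))
          = (if j = l then (1:ℝ) else 0) * W (e j) a (e l) c := by
        intro l
        rw [← parseval j l, Finset.sum_mul]
        refine Finset.sum_congr rfl fun i _ => ?_
        ring
      rw [Finset.sum_congr rfl fun l _ => hl l]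
      simp
    rw [Finset.sum_congr rfl fun j _ => hfin j] at h0
    exact h0
  -- components vanish
  have hcomp : ∀ j1 j2 j3 j4, W (e j1) (e j2) (e j3) (e j4) = 0 := by
    refine weyl_components_vanish hk3 (fun j1 j2 j3 j4 => W (e j1) (e j2) (e j3) (e j4))
      (fun i j l m => anti1 _ _ _ _) (fun i j l m => anti2 _ _ _ _)
      (fun j m => trP (e j) (e m))
  -- W vanishes when all arguments are in Kᗮ
  have hP4 : ∀ a c d, (∀ j, W a c d (e j) = 0) → ∀ p ∈ Kᗮ, W a c d p = 0 := by
    intro a c d h p hp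
    obtain ⟨r, hr⟩ := hexp p hp
    rw [hr, sum4]
    rw [Finset.sum_congr rfl fun j _ => by rw [smul4, h j, mul_zero]]
    exact Finset.sum_const_zero
  have hP3 : ∀ a c, (∀ j3 j4, W a c (e j3) (e j4) = 0) →
      ∀ p3 ∈ Kᗮ, ∀ p4 ∈ Kᗮ, W a c p3 p4 = 0 := by
    intro a c h p3 hp3 p4 hp4
    obtain ⟨r, hr⟩ := hexp p3 hp3
    rw [hr, sum3]
    rw [Finset.sum_congr rfl fun j _ => by
      rw [smul3, hP4 a c (e j) (fun j4 => h j j4) p4 hp4, mul_zero]]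
    exact Finset.sum_const_zero
  have hP2 : ∀ a, (∀ j2 j3 j4, W a (e j2) (e j3) (e j4) = 0) →
      ∀ p2 ∈ Kᗮ, ∀ p3 ∈ Kᗮ, ∀ p4 ∈ Kᗮ, W a p2 p3 p4 = 0 := by
    intro a h p2 hp2 p3 hp3 p4 hp4
    obtain ⟨r, hr⟩ := hexp p2 hp2
    rw [hr, sum2]
    rw [Finset.sum_congr rfl fun j _ => by
      rw [smul2, hP3 a (e j) (fun j3 j4 => h j j3 j4) p3 hp3 p4 hp4, mul_zero]]
    exact Finset.sum_const_zero
  have hP1 : ∀ p1 ∈ Kᗮ, ∀ p2 ∈ Kᗮ, ∀ p3 ∈ Kᗮ, ∀ p4 ∈ Kᗮ, W p1 p2 p3 p4 = 0 := by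
    intro p1 hp1 p2 hp2 p3 hp3 p4 hp4
    obtain ⟨r, hr⟩ := hexp p1 hp1
    rw [hr, sum1]
    rw [Finset.sum_congr rfl fun j _ => by
      rw [smulW, hP2 (e j) (fun j2 j3 j4 => hcomp j j2 j3 j4) p2 hp2 p3 hp3 p4 hp4, mul_zero]]
    exact Finset.sum_const_zero
  have ker2 : ∀ x ∈ K, ∀ a d e', W a x d e' = 0 := by
    intro x hx a d e'
    rw [anti1 a x d e', ker1 x hx a d e']; ring
  intro a c d e'
  obtain ⟨ua, hua, pa, hpa, ha⟩ := hdec a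
  obtain ⟨uc, huc, pc, hpc, hc⟩ := hdec c
  obtain ⟨ud, hud, pd, hpd, hd⟩ := hdec d
  obtain ⟨ue, hue, pe, hpe, hee⟩ := hdec e'
  rw [ha, hc, hd, hee]
  rw [addW, ker1 ua hua _ _ _, zero_add]
  rw [add2, ker2 uc huc _ _ _, zero_add]
  rw [add3, ker3 ud hud _ _ _, zero_add]
  rw [add4, hker ue hue _ _ _, zero_add]
  exact hP1 pa hpa pc hpc pd hpd pe hpe

/-- in Riemannian signature, the kernel of a nonzero Weyl-type tensor has
dimension at most `n - 4` (stated via linearly independent families in the kernel). -/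
theorem kernel_dim_le_of_weylLike_riemannian
    {V : Type*} [AddCommGroup V] [Module ℝ V] {n : ℕ} (hn : 4 ≤ n)
    (g : V → V → ℝ) (W : V → V → V → V → ℝ)
    (b : Module.Basis (Fin n) ℝ V) (ε : Fin n → ℝ)
    (hW : IsWeylLike g W b ε)
    (hpos : ∀ i, ε i = 1)
    (hne : ∃ a c d e, W a c d e ≠ 0) :
    ∀ (m : ℕ) (v : Fin m → V), LinearIndependent ℝ v →
      (∀ i a c d, W a c d (v i) = 0) → m ≤ n - 4 := by
  obtain ⟨hε, hgb, hgsym, hgadd, hgsmul, Wadd, Wsmul, Wa1, Wa2, Wp, hB, htr⟩ := hW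
  intro m v hli hker
  by_contra hm
  push_neg at hm
  let φ : V ≃ₗ[ℝ] EuclideanSpace ℝ (Fin n) :=
    b.equivFun.trans (EuclideanSpace.equiv (Fin n) ℝ).symm.toLinearEquiv
  set W' : EuclideanSpace ℝ (Fin n) → EuclideanSpace ℝ (Fin n) → EuclideanSpace ℝ (Fin n) →
      EuclideanSpace ℝ (Fin n) → ℝ :=
    fun x y z t => W (φ.symm x) (φ.symm y) (φ.symm z) (φ.symm t) with hW'
  have hWW : ∀ a c d e, W a c d e = W' (φ a) (φ c) (φ d) (φ e) := by
    intro a c d e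
    simp only [hW', LinearEquiv.symm_apply_apply]
  have hφb : ∀ i, φ (b i) = EuclideanSpace.basisFun (Fin n) ℝ i := by
    intro i
    ext j
    show b.equivFun (b i) j = EuclideanSpace.basisFun (Fin n) ℝ i j
    rw [Module.Basis.equivFun_self, EuclideanSpace.basisFun_apply]
    simp [EuclideanSpace.single_apply, eq_comm]
  have hbi : ∀ i, φ.symm (EuclideanSpace.basisFun (Fin n) ℝ i) = b i := by
    intro i
    rw [← hφb i, LinearEquiv.symm_apply_apply]
  have addW' : ∀ a a' c d e, W' (a + a') c d e = W' a c d e + W' a' c d e := by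
    intro a a' c d e
    simp only [hW']
    simp only [map_add]
    exact Wadd _ _ _ _ _
  have smulW' : ∀ (r : ℝ) (a c d e), W' (r • a) c d e = r * W' a c d e := by
    intro r a c d e
    simp only [hW']
    simp only [map_smul]
    exact Wsmul _ _ _ _ _
  have anti1' : ∀ a c d e, W' a c d e = - W' c a d e := fun a c d e => Wa1 _ _ _ _
  have anti2' : ∀ a c d e, W' a c d e = - W' a c e d := fun a c d e => Wa2 _ _ _ _
  have pair' : ∀ a c d e, W' a c d e = W' d e a c := fun a c d e => Wp _ _ _ _
  have htr' : ∀ a c, ∑ i, W' (EuclideanSpace.basisFun (Fin n) ℝ i) a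
      (EuclideanSpace.basisFun (Fin n) ℝ i) c = 0 := by
    intro a c
    have h := htr (φ.symm a) (φ.symm c)
    simp only [hpos, one_mul] at h
    rw [← h]
    refine Finset.sum_congr rfl fun i _ => ?_
    simp only [hW', hbi]
  have hker' : ∀ i a c d, W' a c d ((φ ∘ v) i) = 0 := by
    intro i a c d
    simp only [hW']
    simp only [Function.comp_apply, LinearEquiv.symm_apply_apply]
    exact hker i _ _ _
  have hli' : LinearIndependent ℝ (φ ∘ v) := hli.map' φ.toLinearMap (LinearEquiv.ker φ)
  have hrk : Module.finrank ℝ (Submodule.span ℝ (Set.range (⇑φ ∘ v))) = m := by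
    rw [finrank_span_eq_card hli', Fintype.card_fin]
  have hzero := weyl_euclid_zero W' addW' smulW' anti1' anti2' pair' htr' (⇑φ ∘ v) hker'
    (by rw [hrk]; omega)
  obtain ⟨a, c, d, e, hne0⟩ := hne
  exact hne0 (by rw [hWW]; exact hzero _ _ _ _)
end

section
/- Let V be an n-dimensional real vector space with a nondegenerate symmetric bilinear form g of Lorentzian signature (1,n-1), and let W be a nonzero Weyl-type tensor on V. Then dim ker W ≤ n-3, where ker W = {v ∈ V : W(a,b,c,v) = 0 for all a,b,c}. -/
/-- in Lorentzian signature `(1, n-1)`, the kernel of a nonzero Weyl-type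
tensor has dimension at most `n - 3`. -/
theorem kernel_dim_le_of_weylLike_lorentzian
    {V : Type*} [AddCommGroup V] [Module ℝ V] {n : ℕ} (hn : 4 ≤ n)
    (g : V → V → ℝ) (W : V → V → V → V → ℝ)
    (b : Module.Basis (Fin n) ℝ V) (ε : Fin n → ℝ)
    (hW : IsWeylLike g W b ε)
    (hlor : ∃! i, ε i = -1)
    (hne : ∃ a c d e, W a c d e ≠ 0) :
    ∀ (m : ℕ) (v : Fin m → V), LinearIndependent ℝ v →
      (∀ i a c d, W a c d (v i) = 0) → m ≤ n - 3 := by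
  obtain ⟨hε, -, -, -, -, hWa1, hWs1, hA12, hA34, hPair, -, hTr⟩ := hW
  intro m v hv hker
  by_contra hm
  push_neg at hm
  -- derived linearity in the other slots
  have hWa2 : ∀ a c c' d e, W a (c + c') d e = W a c d e + W a c' d e := by
    intro a c c' d e
    have h1 := hA12 a (c + c') d e
    have h2 := hWa1 c c' a d e
    have h3 := hA12 a c d e
    have h4 := hA12 a c' d e
    linarith
  have hWs2 : ∀ (r : ℝ) a c d e, W a (r • c) d e = r * W a c d e := by
    intro r a c d e
    calc W a (r • c) d e = -W (r • c) a d e := hA12 _ _ _ _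
      _ = -(r * W c a d e) := by rw [hWs1]
      _ = r * -W c a d e := by ring
      _ = r * W a c d e := by rw [← hA12]
  have hWa3 : ∀ a c d d' e, W a c (d + d') e = W a c d e + W a c d' e := by
    intro a c d d' e
    calc W a c (d + d') e = W (d + d') e a c := hPair _ _ _ _
      _ = W d e a c + W d' e a c := hWa1 _ _ _ _ _
      _ = W a c d e + W a c d' e := by rw [← hPair a c d e, ← hPair a c d' e]
  have hWs3 : ∀ (r : ℝ) a c d e, W a c (r • d) e = r * W a c d e := by
    intro r a c d e
    calc W a c (r • d) e = W (r • d) e a c := hPair _ _ _ _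
      _ = r * W d e a c := hWs1 _ _ _ _ _
      _ = r * W a c d e := by rw [← hPair a c d e]
  have hWa4 : ∀ a c d e e', W a c d (e + e') = W a c d e + W a c d e' := by
    intro a c d e e'
    calc W a c d (e + e') = W d (e + e') a c := hPair _ _ _ _
      _ = W d e a c + W d e' a c := hWa2 _ _ _ _ _
      _ = W a c d e + W a c d e' := by rw [← hPair a c d e, ← hPair a c d e']
  have hWs4 : ∀ (r : ℝ) a c d e, W a c d (r • e) = r * W a c d e := by
    intro r a c d e
    calc W a c d (r • e) = W d (r • e) a c := hPair _ _ _ _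
      _ = r * W d e a c := hWs2 _ _ _ _ _
      _ = r * W a c d e := by rw [← hPair a c d e]
  have hzero12 : ∀ a d e, W a a d e = 0 := fun a d e => by linarith [hA12 a a d e]
  have hzero34 : ∀ a c d, W a c d d = 0 := fun a c d => by linarith [hA34 a c d d]
  -- the kernel submodule
  let K : Submodule ℝ V :=
    { carrier := {x | ∀ a c d, W a c d x = 0}
      add_mem' := fun hx hy a c d => by rw [hWa4, hx a c d, hy a c d, add_zero]
      zero_mem' := fun a c d => by simpa using hWs4 0 a c d 0
      smul_mem' := fun r x hx a c d => by rw [hWs4, hx a c d, mul_zero] }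
  have hK4 : ∀ k ∈ K, ∀ a c d, W a c d k = 0 := fun k hk => hk
  have hK3 : ∀ k ∈ K, ∀ a c e, W a c k e = 0 := by
    intro k hk a c e
    have := hA34 a c k e
    rw [hk a c e] at this
    linarith
  have hK1 : ∀ k ∈ K, ∀ c d e, W k c d e = 0 := by
    intro k hk c d e
    rw [hPair, hK3 k hk d e c]
  have hK2 : ∀ k ∈ K, ∀ a d e, W a k d e = 0 := by
    intro k hk a d e
    rw [hA12, hK1 k hk a d e, neg_zero]
  haveI : FiniteDimensional ℝ V := Module.Finite.of_basis b
  have hnV : Module.finrank ℝ V = n := by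
    rw [Module.finrank_eq_card_basis b, Fintype.card_fin]
  have hvK : ∀ i, v i ∈ K := fun i a c d => hker i a c d
  have hmK : m ≤ Module.finrank ℝ K := by
    have hv' : LinearIndependent ℝ (fun i => (⟨v i, hvK i⟩ : K)) := by
      apply LinearIndependent.of_comp K.subtype
      exact hv
    simpa using hv'.fintype_card_le_finrank
  obtain ⟨q, hq⟩ := Submodule.exists_isCompl K
  have hdim : Module.finrank ℝ K + Module.finrank ℝ q = n := by
    rw [← hnV]
    exact Submodule.finrank_add_eq_of_isCompl hq
  have hq2 : Module.finrank ℝ q ≤ 2 := by omega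
  obtain ⟨a₀, c₀, d₀, e₀, hW0⟩ := hne
  have hcase : Module.finrank ℝ q = 0 ∨ Module.finrank ℝ q = 1 ∨ Module.finrank ℝ q = 2 := by
    omega
  rcases hcase with h0 | h1 | h2
  · -- dim q = 0 : everything is in the kernel
    have hqbot : q = ⊥ := Submodule.finrank_eq_zero.mp h0
    have hKtop : K = ⊤ := by
      have := hq.sup_eq_top
      rw [hqbot, sup_bot_eq] at this
      exact this
    exact hW0 (hK4 e₀ (hKtop ▸ Submodule.mem_top) a₀ c₀ d₀)
  · -- dim q = 1 : W vanishes by antisymmetry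
    let c1 : Module.Basis (Fin 1) ℝ q := Module.finBasisOfFinrankEq ℝ q h1
    set u : V := (c1 0 : V) with hu
    have hdecomp : ∀ x : V, ∃ k ∈ K, ∃ t : ℝ, x = k + t • u := by
      intro x
      have hx : x ∈ K ⊔ q := by rw [hq.sup_eq_top]; trivial
      obtain ⟨k, hk, w, hw, hkw⟩ := Submodule.mem_sup.mp hx
      refine ⟨k, hk, c1.repr ⟨w, hw⟩ 0, ?_⟩
      have hw1 : (⟨w, hw⟩ : q) = c1.repr ⟨w, hw⟩ 0 • c1 0 := by
        conv_lhs => rw [← c1.sum_repr ⟨w, hw⟩]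
        rw [Fin.sum_univ_one]
      have hw2 : w = c1.repr ⟨w, hw⟩ 0 • u := by
        have := congrArg (Subtype.val) hw1
        simpa using this
      rw [← hkw]
      exact congrArg (fun z => k + z) hw2
    have : W a₀ c₀ d₀ e₀ = 0 := by
      obtain ⟨kd, hkd, s, hd⟩ := hdecomp d₀
      obtain ⟨ke, hke, t, he⟩ := hdecomp e₀
      rw [hd, he, hWa3, hWs3, hK3 kd hkd, hWa4, hWs4, hK4 ke hke, hzero34]
      ring
    exact hW0 this
  · -- main case : dim q = 2
    let c2 : Module.Basis (Fin 2) ℝ q := Module.finBasisOfFinrankEq ℝ q h2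
    let P : V →ₗ[ℝ] q := Submodule.projectionOnto q K hq.symm
    let A : V →ₗ[ℝ] ℝ := (c2.coord 0).comp P
    let B : V →ₗ[ℝ] ℝ := (c2.coord 1).comp P
    set u0 : V := (c2 0 : V) with hu0
    set u1 : V := (c2 1 : V) with hu1
    have hPu : ∀ j : Fin 2, P (c2 j : V) = c2 j :=
      fun j => Submodule.projectionOnto_apply_left hq.symm (c2 j)
    have hAu0 : A u0 = 1 := by
      simp [A, hu0, hPu 0, Module.Basis.coord_apply, Module.Basis.repr_self]
    have hAu1 : A u1 = 0 := by
      simp [A, hu1, hPu 1, Module.Basis.coord_apply, Module.Basis.repr_self, Finsupp.single_apply]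
    have hBu0 : B u0 = 0 := by
      simp [B, hu0, hPu 0, Module.Basis.coord_apply, Module.Basis.repr_self, Finsupp.single_apply]
    have hBu1 : B u1 = 1 := by
      simp [B, hu1, hPu 1, Module.Basis.coord_apply, Module.Basis.repr_self]
    have hdecomp : ∀ x : V, x - A x • u0 - B x • u1 ∈ K := by
      intro x
      have h1 : ((P x : V)) = A x • u0 + B x • u1 := by
        have hs := c2.sum_repr (P x)
        have := congrArg (Subtype.val) hs
        rw [Fin.sum_univ_two] at this
        simpa [A, B, Module.Basis.coord_apply, hu0, hu1] using this.symm
      have h2 : x - (P x : V) ∈ K := by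
        have hkerP : LinearMap.ker P = K := Submodule.ker_projectionOnto hq.symm
        rw [← hkerP, LinearMap.mem_ker, map_sub]
        have : P ((P x : V)) = P x := Submodule.projectionOnto_apply_left hq.symm (P x)
        rw [this, sub_self]
      have h3 : x - A x • u0 - B x • u1 = x - (P x : V) := by
        rw [h1]; abel
      rw [h3]; exact h2
    -- expansion lemmas in each slot
    have e1 : ∀ x c d e, W x c d e = A x * W u0 c d e + B x * W u1 c d e := by
      intro x c d e
      have hx : x = (x - A x • u0 - B x • u1) + A x • u0 + B x • u1 := by abel
      calc W x c d e
          = W ((x - A x • u0 - B x • u1) + A x • u0 + B x • u1) c d e := by rw [← hx]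
        _ = W ((x - A x • u0 - B x • u1) + A x • u0) c d e + W (B x • u1) c d e :=
            hWa1 _ _ _ _ _
        _ = W (x - A x • u0 - B x • u1) c d e + W (A x • u0) c d e + W (B x • u1) c d e := by
            rw [hWa1]
        _ = A x * W u0 c d e + B x * W u1 c d e := by
            rw [hK1 _ (hdecomp x), hWs1, hWs1]; ring
    have e2 : ∀ a x d e, W a x d e = A x * W a u0 d e + B x * W a u1 d e := by
      intro a x d e
      calc W a x d e = -W x a d e := hA12 _ _ _ _
        _ = -(A x * W u0 a d e + B x * W u1 a d e) := by rw [e1]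
        _ = A x * -W u0 a d e + B x * -W u1 a d e := by ring
        _ = A x * W a u0 d e + B x * W a u1 d e := by
            rw [← hA12 a u0 d e, ← hA12 a u1 d e]
    have e3 : ∀ a c x e, W a c x e = A x * W a c u0 e + B x * W a c u1 e := by
      intro a c x e
      calc W a c x e = W x e a c := hPair _ _ _ _
        _ = A x * W u0 e a c + B x * W u1 e a c := e1 _ _ _ _
        _ = A x * W a c u0 e + B x * W a c u1 e := by
            rw [← hPair a c u0 e, ← hPair a c u1 e]
    have e4 : ∀ a c d x, W a c d x = A x * W a c d u0 + B x * W a c d u1 := by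
      intro a c d x
      calc W a c d x = W d x a c := hPair _ _ _ _
        _ = A x * W d u0 a c + B x * W d u1 a c := e2 _ _ _ _
        _ = A x * W a c d u0 + B x * W a c d u1 := by
            rw [← hPair a c d u0, ← hPair a c d u1]
    set lam : ℝ := W u0 u1 u0 u1 with hlamdef
    have hval34 : ∀ x y, W u0 u1 x y = (A x * B y - B x * A y) * lam := by
      intro x y
      calc W u0 u1 x y = A x * W u0 u1 u0 y + B x * W u0 u1 u1 y := e3 _ _ _ _
        _ = A x * (A y * W u0 u1 u0 u0 + B y * W u0 u1 u0 u1)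
            + B x * (A y * W u0 u1 u1 u0 + B y * W u0 u1 u1 u1) := by
            rw [e4 u0 u1 u0 y, e4 u0 u1 u1 y]
        _ = (A x * B y - B x * A y) * lam := by
            rw [hzero34, hzero34, hA34 u0 u1 u1 u0]
            ring
    have hval12 : ∀ x y d e, W x y d e = (A x * B y - B x * A y) * W u0 u1 d e := by
      intro x y d e
      calc W x y d e = A x * W u0 y d e + B x * W u1 y d e := e1 _ _ _ _
        _ = A x * (A y * W u0 u0 d e + B y * W u0 u1 d e)
            + B x * (A y * W u1 u0 d e + B y * W u1 u1 d e) := by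
            rw [e2 u0 y d e, e2 u1 y d e]
        _ = (A x * B y - B x * A y) * W u0 u1 d e := by
            rw [hzero12, hzero12, hA12 u1 u0 d e]
            ring
    have hformula : ∀ a c d e,
        W a c d e = (A a * B c - B a * A c) * ((A d * B e - B d * A e) * lam) := by
      intro a c d e
      rw [hval12, hval34]
    have hlam : lam ≠ 0 := by
      intro h0
      apply hW0
      rw [hformula, h0]
      ring
    -- trace identities
    have htrace : ∀ x y : V,
        (∑ i, ε i * ((A (b i) * B x - B (b i) * A x) * (A (b i) * B y - B (b i) * A y))) * lam
          = 0 := by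
      intro x y
      have h := hTr x y
      calc (∑ i, ε i * ((A (b i) * B x - B (b i) * A x) * (A (b i) * B y - B (b i) * A y))) * lam
          = ∑ i, (ε i * ((A (b i) * B x - B (b i) * A x) * (A (b i) * B y - B (b i) * A y))) * lam :=
            Finset.sum_mul _ _ _
        _ = ∑ i, ε i * W (b i) x (b i) y := by
            apply Finset.sum_congr rfl
            intro i _
            rw [hformula]
            ring
        _ = 0 := h
    have SAA : ∑ i, ε i * (A (b i) * A (b i)) = 0 := by
      have h := htrace u1 u1
      have h2 : (∑ i, ε i * (A (b i) * A (b i))) * lam = 0 := by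
        rw [← h]
        congr 1
        apply Finset.sum_congr rfl
        intro i _
        rw [hAu1, hBu1]
        ring
      exact (mul_eq_zero.mp h2).resolve_right hlam
    have SBB : ∑ i, ε i * (B (b i) * B (b i)) = 0 := by
      have h := htrace u0 u0
      have h2 : (∑ i, ε i * (B (b i) * B (b i))) * lam = 0 := by
        rw [← h]
        congr 1
        apply Finset.sum_congr rfl
        intro i _
        rw [hAu0, hBu0]
        ring
      exact (mul_eq_zero.mp h2).resolve_right hlam
    have SAB : ∑ i, ε i * (A (b i) * B (b i)) = 0 := by
      have h := htrace u1 u0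
      have h2 : (∑ i, -(ε i * (A (b i) * B (b i)))) * lam = 0 := by
        rw [← h]
        congr 1
        apply Finset.sum_congr rfl
        intro i _
        rw [hAu0, hAu1, hBu0, hBu1]
        ring
      rw [Finset.sum_neg_distrib, neg_mul, neg_eq_zero] at h2
      exact (mul_eq_zero.mp h2).resolve_right hlam
    -- Lorentzian step
    obtain ⟨i0, hi0, hiuniq⟩ := hlor
    have hone : ∀ i, i ≠ i0 → ε i = 1 := by
      intro i hi
      rcases hε i with h | h
      · exact h
      · exact absurd (hiuniq i h) hi
    set s : Finset (Fin n) := Finset.univ.erase i0 with hs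
    have hred : ∀ G : Fin n → ℝ, (∑ i, ε i * G i) = 0 → ∑ i ∈ s, G i = G i0 := by
      intro G hG
      have h1 : ε i0 * G i0 + ∑ i ∈ s, ε i * G i = ∑ i, ε i * G i :=
        Finset.add_sum_erase Finset.univ (fun i => ε i * G i) (Finset.mem_univ i0)
      have h2 : ∑ i ∈ s, ε i * G i = ∑ i ∈ s, G i := by
        apply Finset.sum_congr rfl
        intro i hi
        rw [hone i (Finset.ne_of_mem_erase hi), one_mul]
      rw [hG, hi0, h2] at h1
      linarith
    have hFF := hred (fun i => A (b i) * A (b i)) SAA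
    have hHH := hred (fun i => B (b i) * B (b i)) SBB
    have hFH := hred (fun i => A (b i) * B (b i)) SAB
    beta_reduce at hFF hHH hFH
    have hT : ∑ i ∈ s, (A (b i) * B (b i0) - B (b i) * A (b i0)) ^ 2 = 0 := by
      have expand : ∀ i, (A (b i) * B (b i0) - B (b i) * A (b i0)) ^ 2
          = (A (b i) * A (b i)) * (B (b i0) * B (b i0))
            - (2 * A (b i0) * B (b i0)) * (A (b i) * B (b i))
            + (B (b i) * B (b i)) * (A (b i0) * A (b i0)) := by
        intro i; ring
      calc ∑ i ∈ s, (A (b i) * B (b i0) - B (b i) * A (b i0)) ^ 2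
          = ∑ i ∈ s, ((A (b i) * A (b i)) * (B (b i0) * B (b i0))
            - (2 * A (b i0) * B (b i0)) * (A (b i) * B (b i))
            + (B (b i) * B (b i)) * (A (b i0) * A (b i0))) :=
            Finset.sum_congr rfl fun i _ => expand i
        _ = (∑ i ∈ s, A (b i) * A (b i)) * (B (b i0) * B (b i0))
            - (2 * A (b i0) * B (b i0)) * (∑ i ∈ s, A (b i) * B (b i))
            + (∑ i ∈ s, B (b i) * B (b i)) * (A (b i0) * A (b i0)) := by
            rw [Finset.sum_add_distrib, Finset.sum_sub_distrib, ← Finset.sum_mul,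
              ← Finset.mul_sum, ← Finset.sum_mul]
        _ = 0 := by rw [hFF, hHH, hFH]; ring
    have hterm : ∀ i, A (b i) * B (b i0) - B (b i) * A (b i0) = 0 := by
      intro i
      by_cases hi : i = i0
      · rw [hi]; ring
      · have hmem : i ∈ s := Finset.mem_erase.mpr ⟨hi, Finset.mem_univ i⟩
        have := (Finset.sum_eq_zero_iff_of_nonneg (fun j _ => sq_nonneg _)).mp hT i hmem
        exact pow_eq_zero_iff (two_ne_zero) |>.mp this
    have hphi : (B (b i0)) • A - (A (b i0)) • B = 0 := by
      apply b.ext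
      intro i
      have := hterm i
      simp only [LinearMap.sub_apply, LinearMap.smul_apply, smul_eq_mul, LinearMap.zero_apply]
      linarith
    have hB0 : B (b i0) = 0 := by
      have := congrArg (fun f : V →ₗ[ℝ] ℝ => f u0) hphi
      simp only [LinearMap.sub_apply, LinearMap.smul_apply, smul_eq_mul, LinearMap.zero_apply,
        hAu0, hBu0] at this
      linarith
    have hA0 : A (b i0) = 0 := by
      have := congrArg (fun f : V →ₗ[ℝ] ℝ => f u1) hphi
      simp only [LinearMap.sub_apply, LinearMap.smul_apply, smul_eq_mul, LinearMap.zero_apply,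
        hAu1, hBu1] at this
      linarith
    have hFzero : ∀ i, A (b i) = 0 := by
      have hsum : ∑ i ∈ s, A (b i) * A (b i) = 0 := by rw [hFF, hA0, mul_zero]
      intro i
      by_cases hi : i = i0
      · rw [hi]; exact hA0
      · have hmem : i ∈ s := Finset.mem_erase.mpr ⟨hi, Finset.mem_univ i⟩
        have := (Finset.sum_eq_zero_iff_of_nonneg (fun j _ => mul_self_nonneg _)).mp hsum i hmem
        exact mul_self_eq_zero.mp this
    have hAzero : A = 0 := by
      apply b.ext
      intro i
      rw [hFzero i, LinearMap.zero_apply]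
    rw [hAzero, LinearMap.zero_apply] at hAu0
    exact one_ne_zero hAu0.symm
end

section
/- Let V be an n-dimensional real vector space with a nondegenerate symmetric bilinear form g of signature (p,q) with 2 ≤ p ≤ q, and let W be a nonzero Weyl-type tensor on V. Then dim ker W ≤ n-2. -/
/-- in signature `(p, q)` with `2 ≤ p ≤ q`, the kernel of a nonzero Weyl-type
tensor has dimension at most `n - 2`. -/
theorem kernel_dim_le_of_weylLike_general_signature
    {V : Type*} [AddCommGroup V] [Module ℝ V] {n p : ℕ} (hn : 4 ≤ n)
    (g : V → V → ℝ) (W : V → V → V → V → ℝ)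
    (b : Module.Basis (Fin n) ℝ V) (ε : Fin n → ℝ)
    (hW : IsWeylLike g W b ε)
    (hp : ∃ S : Finset (Fin n), S.card = p ∧ ∀ i, i ∈ S ↔ ε i = -1)
    (hp2 : 2 ≤ p) (hpq : p ≤ n - p)
    (hne : ∃ a c d e, W a c d e ≠ 0) :
    ∀ (m : ℕ) (v : Fin m → V), LinearIndependent ℝ v →
      (∀ i a c d, W a c d (v i) = 0) → m ≤ n - 2 := by
  obtain ⟨hε, hgb, hgsym, hgadd, hgsmul, hWadd, hWsmul, hA1, hA2, hpair, hbianchi, htrace⟩ := hW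
  intro m v hli hker
  haveI : FiniteDimensional ℝ V := Module.Finite.of_basis b
  have hfr : Module.finrank ℝ V = n := by
    rw [Module.finrank_eq_card_basis b, Fintype.card_fin]
  -- linearity in the 4th slot
  have hWadd4 : ∀ a c d e e', W a c d (e + e') = W a c d e + W a c d e' := by
    intro a c d e e'
    have e1 := hA2 a c d (e + e')
    have e2 := hpair a c (e + e') d
    have e3 := hWadd e e' d a c
    have e5 := hpair e d a c
    have e6 := hA2 a c d e
    have e7 := hpair e' d a c
    have e8 := hA2 a c d e'
    linarith
  have hWsmul4 : ∀ (r : ℝ) a c d e, W a c d (r • e) = r * W a c d e := by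
    intro r a c d e
    calc W a c d (r • e) = -W a c (r • e) d := hA2 _ _ _ _
      _ = -W (r • e) d a c := by rw [hpair a c (r • e) d]
      _ = -(r * W e d a c) := by rw [hWsmul]
      _ = -(r * W a c e d) := by rw [hpair e d a c]
      _ = -(r * -W a c d e) := by
            rw [show W a c e d = -W a c d e from by linarith [hA2 a c d e]]
      _ = r * W a c d e := by ring
  have hW0 : ∀ a c d, W a c d 0 = 0 := by
    intro a c d
    have := hWsmul4 0 a c d 0
    simpa using this
  -- diagonal vanishing in last two slots
  have hWdiag : ∀ a c d, W a c d d = 0 := by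
    intro a c d
    have := hA2 a c d d
    linarith
  -- the kernel submodule
  let K : Submodule ℝ V :=
    { carrier := {x | ∀ a c d, W a c d x = 0}
      add_mem' := by intro x y hx hy a c d; rw [hWadd4, hx, hy]; ring
      zero_mem' := by intro a c d; exact hW0 a c d
      smul_mem' := by intro r x hx a c d; rw [hWsmul4, hx]; ring }
  have hvK : ∀ i, v i ∈ K := fun i => hker i
  -- m ≤ finrank K
  have hmK : m ≤ Module.finrank ℝ K := by
    let v' : Fin m → K := fun i => ⟨v i, hvK i⟩
    have hli' : LinearIndependent ℝ v' := by
      apply LinearIndependent.of_comp K.subtype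
      exact hli
    simpa using hli'.fintype_card_le_finrank
  -- suppose m > n - 2
  by_contra hcon
  push_neg at hcon
  -- then finrank K ≥ n - 1
  have hK1 : n - 1 ≤ Module.finrank ℝ K := by omega
  -- K ≠ ⊤, else W = 0
  obtain ⟨a₀, c₀, d₀, e₀, hne⟩ := hne
  have hKne : K ≠ ⊤ := by
    intro h
    exact hne (by have : e₀ ∈ K := h ▸ Submodule.mem_top; exact this a₀ c₀ d₀)
  have hKlt : Module.finrank ℝ K < n := by
    have := Submodule.finrank_lt hKne
    omega
  have hKeq : Module.finrank ℝ K = n - 1 := by omega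
  -- pick u ∉ K
  obtain ⟨u, hu⟩ : ∃ u, u ∉ K := by
    by_contra h
    push_neg at h
    exact hKne (Submodule.eq_top_iff'.mpr h)
  -- K ⊔ span u = ⊤
  have hsup : K ⊔ Submodule.span ℝ {u} = ⊤ := by
    apply Submodule.eq_top_of_finrank_eq
    rw [hfr]
    have hlt : K < K ⊔ Submodule.span ℝ {u} := by
      refine lt_of_le_of_ne le_sup_left ?_
      intro h
      apply hu
      rw [h]
      exact Submodule.mem_sup_right (Submodule.mem_span_singleton_self u)
    have h1 := Submodule.finrank_lt_finrank_of_lt hlt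
    have h2 : Module.finrank ℝ (↥(K ⊔ Submodule.span ℝ {u})) ≤ n := by
      have := Submodule.finrank_le (K ⊔ Submodule.span ℝ {u})
      omega
    omega
  -- decompose any vector as k + β • u
  have hdec : ∀ x : V, ∃ k ∈ K, ∃ β : ℝ, x = k + β • u := by
    intro x
    have hx : x ∈ K ⊔ Submodule.span ℝ {u} := hsup ▸ Submodule.mem_top
    obtain ⟨k, hk, s, hs, hx⟩ := Submodule.mem_sup.mp hx
    obtain ⟨β, hβ⟩ := Submodule.mem_span_singleton.mp hs
    exact ⟨k, hk, β, by rw [← hx, ← hβ]⟩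
  -- W vanishes: contradiction
  apply hne
  obtain ⟨k, hk, β, hd⟩ := hdec d₀
  obtain ⟨k', hk', β', he⟩ := hdec e₀
  rw [hd, he, hWadd4, hWsmul4, hk' a₀ c₀ _]
  have huu : W u u a₀ c₀ = 0 := by linarith [hA1 u u a₀ c₀]
  have hkuc : W k u a₀ c₀ = 0 := by
    have h1 := hpair a₀ c₀ k u
    have h2 := hA2 a₀ c₀ u k
    have h3 := hk a₀ c₀ u
    linarith
  have hbu : W (β • u) u a₀ c₀ = 0 := by rw [hWsmul, huu, mul_zero]
  have h3 : W a₀ c₀ (k + β • u) u = 0 := by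
    have h1 := hpair a₀ c₀ (k + β • u) u
    have h2 := hWadd k (β • u) u a₀ c₀
    linarith
  rw [h3]
  ring
end

section
/- Let V be a subspace of an n-dimensional real vector space E equipped with a nondegenerate symmetric bilinear form g of signature (p,q), where 0 ≤ p ≤ q. If dim V ≥ n - 3 + min(p,2), then V contains a subspace V' of dimension n-3 on which the restriction of g is nondegenerate. -/
/-- A symmetric bilinear form `g` on `E` admitting an orthonormal basis `b` with
signs `ε` (`g (b i) (b j) = ε i δ_{ij}`, `ε i = ±1`); in particular `g` is nondegenerate,
of signature determined by the number of `-1`s among the `ε i`. -/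
def IsOrthoForm {E : Type*} [AddCommGroup E] [Module ℝ E] {n : ℕ}
    (g : E → E → ℝ) (b : Module.Basis (Fin n) ℝ E) (ε : Fin n → ℝ) : Prop :=
  (∀ i, ε i = 1 ∨ ε i = -1) ∧
  (∀ i j, g (b i) (b j) = if i = j then ε i else 0) ∧
  (∀ x y, g x y = g y x) ∧
  (∀ x x' y, g (x + x') y = g x y + g x' y) ∧
  (∀ (r : ℝ) (x y : E), g (r • x) y = r * g x y)

open Module LinearMap in
/-- if `dim V ≥ n - 3 + min p 2` in signature `(p,q)`, `p ≤ q`, then `V`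
contains an `(n-3)`-dimensional subspace on which `g` restricts nondegenerately. -/
theorem exists_nondegenerate_subspace_of_dim_ge
    {E : Type*} [AddCommGroup E] [Module ℝ E] {n p : ℕ} (hn : 4 ≤ n)
    (g : E → E → ℝ) (b : Module.Basis (Fin n) ℝ E) (ε : Fin n → ℝ)
    (hg : IsOrthoForm g b ε)
    (hp : ∃ S : Finset (Fin n), S.card = p ∧ ∀ i, i ∈ S ↔ ε i = -1)
    (hpq : p ≤ n - p)
    (V : Submodule ℝ E)
    (hdim : n - 3 + min p 2 ≤ Module.finrank ℝ V) :
    ∃ V' : Submodule ℝ E, V' ≤ V ∧ Module.finrank ℝ V' = n - 3 ∧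
      ∀ x ∈ V', (∀ y ∈ V', g x y = 0) → x = 0 := by
  obtain ⟨hε, hbb, hsym, hadd, hsmul⟩ := hg
  have hεne : ∀ i, ε i ≠ 0 := fun i => by rcases hε i with h | h <;> rw [h] <;> norm_num
  have hadd' : ∀ x y y', g x (y + y') = g x y + g x y' := fun x y y' => by
    rw [hsym, hadd, hsym y x, hsym y' x]
  have hsmul' : ∀ (r : ℝ) (x y : E), g x (r • y) = r * g x y := fun r x y => by
    rw [hsym, hsmul, hsym]
  set B : LinearMap.BilinForm ℝ E := LinearMap.mk₂ ℝ g hadd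
    (fun r x y => by rw [hsmul]; rfl) hadd' (fun r x y => by rw [hsmul']; rfl) with hBdef
  have hBapp : ∀ x y, B x y = g x y := fun x y => rfl
  have keysum : ∀ {ι : Type} [Fintype ι] (c : ι → ℝ) (w : ι → E) (y : E),
      g (∑ i, c i • w i) y = ∑ i, c i * g (w i) y := by
    intro ι _ c w y
    calc g (∑ i, c i • w i) y = B.flip y (∑ i, c i • w i) := rfl
      _ = ∑ i, B.flip y (c i • w i) := map_sum (B.flip y) _ Finset.univ
      _ = ∑ i, c i * g (w i) y := by
          refine Finset.sum_congr rfl fun i _ => ?_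
          rw [map_smul]
          rfl
  have key : ∀ (x : E) (i : Fin n), g x (b i) = b.repr x i * ε i := by
    intro x i
    have h1 : g x (b i) = g (∑ j, b.repr x j • b j) (b i) := by rw [b.sum_repr x]
    rw [h1, keysum]
    simp [hbb, mul_ite, Finset.sum_ite_eq']
  have gxx : ∀ x : E, g x x = ∑ i, ε i * (b.repr x i) ^ 2 := by
    intro x
    have h1 := keysum (fun i => b.repr x i) (fun i => b i) x
    rw [b.sum_repr x] at h1
    rw [h1]
    refine Finset.sum_congr rfl fun i _ => ?_
    rw [hsym, key]
    ring
  have hsymm : B.IsSymm := ⟨fun x y => hsym x y⟩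
  have hrefl : B.IsRefl := hsymm.isRefl
  haveI : FiniteDimensional ℝ E := b.finiteDimensional_of_finite
  have hnE : finrank ℝ E = n := by rw [finrank_eq_card_basis b, Fintype.card_fin]
  have hBnd : B.Nondegenerate := by
    refine (LinearMap.IsRefl.nondegenerate_iff_separatingLeft hrefl).mpr ?_
    intro x hx
    have hc : ∀ i, b.repr x i = 0 := by
      intro i
      have h := hx (b i)
      rw [hBapp, key] at h
      exact (mul_eq_zero.mp h).resolve_right (hεne i)
    have hx0 : b.repr x = 0 := by ext i; simp [hc i]
    exact b.repr.map_eq_zero_iff.mp hx0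
  obtain ⟨S, hScard, hS⟩ := hp
  set R := V ⊓ B.orthogonal V with hRdef
  -- finrank R ≤ p
  have hRp : finrank ℝ R ≤ p := by
    set f : E →ₗ[ℝ] (S → ℝ) := LinearMap.pi fun i => b.coord i.1 with hfdef
    have hinj : ∀ x : R, f (x : E) = 0 → (x : E) = 0 := by
      intro x hfx
      have hxx : g (x : E) (x : E) = 0 := x.2.2 (x : E) x.2.1
      rw [gxx] at hxx
      have hcS : ∀ i ∈ S, b.repr (x : E) i = 0 := by
        intro i hi
        have := congrFun hfx ⟨i, hi⟩
        simpa [hfdef] using this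
      have hnonneg : ∀ i ∈ Finset.univ, (0:ℝ) ≤ ε i * (b.repr (x:E) i) ^ 2 := by
        intro i _
        by_cases hi : i ∈ S
        · rw [hcS i hi]; simp
        · have : ε i = 1 := (hε i).resolve_right (fun h => hi ((hS i).mpr h))
          rw [this]; positivity
      have hzero := (Finset.sum_eq_zero_iff_of_nonneg hnonneg).mp hxx
      have hc : ∀ i, b.repr (x : E) i = 0 := by
        intro i
        by_cases hi : i ∈ S
        · exact hcS i hi
        · have h1 : ε i = 1 := (hε i).resolve_right (fun h => hi ((hS i).mpr h))
          have := hzero i (Finset.mem_univ i)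
          rw [h1, one_mul, pow_eq_zero_iff] at this
          exact this
          norm_num
      have hx0 : b.repr (x : E) = 0 := by ext i; simp [hc i]
      exact b.repr.map_eq_zero_iff.mp hx0
    have hinj' : Function.Injective (f ∘ₗ R.subtype) :=
      LinearMap.ker_eq_bot.mp (LinearMap.ker_eq_bot'.mpr fun m h => Subtype.ext (hinj m h))
    calc finrank ℝ R ≤ finrank ℝ (S → ℝ) := LinearMap.finrank_le_finrank_of_injective hinj'
      _ = p := by rw [Module.finrank_pi, Fintype.card_coe, hScard]
  -- finrank R ≤ n - finrank V
  have hRorth : finrank ℝ R + finrank ℝ V ≤ n := by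
    have h1 : R ≤ B.orthogonal V := inf_le_right
    have h2 : finrank ℝ R ≤ finrank ℝ (B.orthogonal V) := Submodule.finrank_mono h1
    rw [LinearMap.BilinForm.finrank_orthogonal hBnd V, hnE] at h2
    have h3 : finrank ℝ V ≤ n := hnE ▸ Submodule.finrank_le V
    omega
  -- complement of R inside V
  obtain ⟨W₀, hW₀⟩ := Submodule.exists_isCompl (R.comap V.subtype)
  set W : Submodule ℝ E := W₀.map V.subtype with hWdef
  have hWV : W ≤ V := Submodule.map_subtype_le V W₀
  have hfW0 : finrank ℝ W = finrank ℝ W₀ := Submodule.finrank_map_subtype_eq V W₀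
  have hfR' : finrank ℝ (R.comap V.subtype) = finrank ℝ R :=
    (Submodule.comapSubtypeEquivOfLe (inf_le_left : R ≤ V)).finrank_eq
  have hsumrk := Submodule.finrank_add_eq_of_isCompl hW₀
  have hVle : finrank ℝ V ≤ n := hnE ▸ Submodule.finrank_le V
  have hle : n - 3 ≤ finrank ℝ W := by omega
  -- nondegeneracy of restriction to W
  have hWnd : (B.restrict W).Nondegenerate := by
    refine (LinearMap.IsRefl.nondegenerate_iff_separatingLeft (hsymm.restrict W).isRefl).mpr ?_
    rintro ⟨w, hw⟩ hwall
    have hwV : w ∈ V := hWV hw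
    have horth : w ∈ B.orthogonal V := by
      intro v hv
      have hmem : (⟨v, hv⟩ : V) ∈ (R.comap V.subtype) ⊔ W₀ := by
        rw [hW₀.sup_eq_top]; trivial
      obtain ⟨r₀, hr₀, w₀, hw₀, hsum'⟩ := Submodule.mem_sup.mp hmem
      have hv' : v = (r₀ : E) + ((w₀ : V) : E) := by
        have h := congrArg (Subtype.val) hsum'
        simpa using h.symm
      have h1 : g (r₀ : E) w = 0 := by
        rw [hsym]
        exact (Submodule.mem_comap.mp hr₀).2 w hwV
      have h2 : g ((w₀ : V) : E) w = 0 := by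
        rw [hsym]
        exact hwall ⟨((w₀ : V) : E), Submodule.mem_map.mpr ⟨w₀, hw₀, rfl⟩⟩
      show g v w = 0
      rw [hv', hadd, h1, h2, add_zero]
    have hwR : w ∈ R := ⟨hwV, horth⟩
    obtain ⟨w₁, hw₁, hw₁e⟩ := Submodule.mem_map.mp hw
    have hmem : w₁ ∈ (R.comap V.subtype) ⊓ W₀ :=
      ⟨Submodule.mem_comap.mpr (by rw [hw₁e]; exact hwR), hw₁⟩
    rw [hW₀.inf_eq_bot] at hmem
    apply Subtype.ext
    show w = 0
    rw [← hw₁e, (Submodule.mem_bot _).mp hmem]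
    rfl
  -- orthogonal basis of W
  obtain ⟨v, hv⟩ := LinearMap.BilinForm.exists_orthogonal_basis (LinearMap.BilinForm.isSymm_iff.mp (hsymm.restrict W))
  have hvd : ∀ i, B.restrict W (v i) (v i) ≠ 0 := fun i =>
    LinearMap.BilinForm.iIsOrtho.not_isOrtho_basis_self_of_nondegenerate hv hWnd i
  set w : Fin (n - 3) → E := fun i => ((v (Fin.castLE hle i) : W) : E) with hwdef
  have hwV' : ∀ i, w i ∈ V := fun i => hWV (v (Fin.castLE hle i)).2
  have hlin : LinearIndependent ℝ w := by
    have h1 : LinearIndependent ℝ (fun i : Fin (n - 3) => v (Fin.castLE hle i)) :=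
      v.linearIndependent.comp _ (Fin.castLE_injective hle)
    exact h1.map' W.subtype W.ker_subtype
  refine ⟨Submodule.span ℝ (Set.range w), ?_, ?_, ?_⟩
  · rw [Submodule.span_le]
    rintro x ⟨i, rfl⟩
    exact hwV' i
  · rw [finrank_span_eq_card hlin, Fintype.card_fin]
  · intro x hx hxall
    obtain ⟨c, rfl⟩ := (Submodule.mem_span_range_iff_exists_fun ℝ).mp hx
    have hcz : ∀ j, c j = 0 := by
      intro j
      have h0 : g (∑ i, c i • w i) (w j) = 0 :=
        hxall _ (Submodule.subset_span ⟨j, rfl⟩)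
      rw [keysum] at h0
      have hterm : ∀ i ∈ Finset.univ, i ≠ j → c i * g (w i) (w j) = 0 := by
        intro i _ hij
        have hne : Fin.castLE hle i ≠ Fin.castLE hle j :=
          fun h => hij (Fin.castLE_injective hle h)
        have h2 : (B.restrict W) (v (Fin.castLE hle i)) (v (Fin.castLE hle j)) = 0 := hv hne
        have h3 : g (w i) (w j) = 0 := h2
        rw [h3, mul_zero]
      rw [Finset.sum_eq_single j hterm (fun h => absurd (Finset.mem_univ j) h)] at h0
      have hdj : g (w j) (w j) ≠ 0 := hvd (Fin.castLE hle j)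
      exact (mul_eq_zero.mp h0).resolve_right hdj
    simp [hcz]
end

section
/- Let T be a real vector space with a nondegenerate symmetric bilinear form and T' = T₁ ⊕ T₂ an orthogonal decomposition of a subspace, where the form is definite on T₁ (dim T₁ = m) and T₂ is totally null of dimension r. Then Λ²T' is a Lie subalgebra of so(T) isomorphic to (so(m) ⊕ a(r)) ⋉ ℝ^{rm}, where a(r) = Λ²T₂ is an abelian Lie algebra of dimension r(r-1)/2, ℝ^{rm} = T₁ ⊗ T₂ is an abelian ideal, so(m) = Λ²T₁ acts on T₁⊗T₂ via the standard representation on T₁, and a(r) acts trivially modulo Λ²T₂. -/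
/-- The endomorphism of `T` corresponding to `u ∧ v` under the identification
`Λ²T ≅ so(T)` via the bilinear form `B`: `w ↦ B(u,w)•v − B(v,w)•u`. -/
def wedgeEnd {T : Type*} [AddCommGroup T] [Module ℝ T]
    (B : T → T → ℝ) (u v : T) : T → T :=
  fun w => B u w • v - B v w • u

/-- Commutator bracket of endomorphisms (as plain maps). -/
def brk {T : Type*} [AddCommGroup T] (f g : T → T) : T → T :=
  fun w => f (g w) - g (f w)

/-- `B` is a symmetric nondegenerate bilinear form. -/
def IsSymmNondeg {T : Type*} [AddCommGroup T] [Module ℝ T] (B : T → T → ℝ) : Prop :=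
  (∀ x y, B x y = B y x) ∧
  (∀ x x' y, B (x + x') y = B x y + B x' y) ∧
  (∀ (r : ℝ) (x y : T), B (r • x) y = r * B x y) ∧
  (∀ x, (∀ y, B x y = 0) → x = 0)

namespace L2Aux
variable {T : Type*} [AddCommGroup T] [Module ℝ T] {B : T → T → ℝ}

theorem addr (hB : IsSymmNondeg B) (x y z : T) : B x (y + z) = B x y + B x z := by
  rw [hB.1, hB.2.1, hB.1 y, hB.1 z]
theorem smulr (hB : IsSymmNondeg B) (c : ℝ) (x y : T) : B x (c • y) = c * B x y := by
  rw [hB.1, hB.2.2.1, hB.1]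
theorem subr (hB : IsSymmNondeg B) (x y z : T) : B x (y - z) = B x y - B x z := by
  have := addr hB x z (y - z); simp at this; linarith [this]
theorem subl (hB : IsSymmNondeg B) (x y z : T) : B (x - y) z = B x z - B y z := by
  rw [hB.1, subr hB, hB.1 z, hB.1 z]
theorem zerol (hB : IsSymmNondeg B) (y : T) : B 0 y = 0 := by
  have := hB.2.2.1 0 0 y; simpa using this

/-- bilinear map version -/
noncomputable def bl (hB : IsSymmNondeg B) : T →ₗ[ℝ] T →ₗ[ℝ] ℝ :=
  LinearMap.mk₂ ℝ B hB.2.1 (fun c x y => hB.2.2.1 c x y) (addr hB) (smulr hB)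

noncomputable def wl (hB : IsSymmNondeg B) : T →ₗ[ℝ] T →ₗ[ℝ] (T → T) :=
  LinearMap.mk₂ ℝ (wedgeEnd B)
    (fun u u' v => by funext w; simp [wedgeEnd, hB.2.1, add_smul, smul_add]; abel)
    (fun c u v => by funext w; simp [wedgeEnd, hB.2.2.1, mul_smul, smul_sub, smul_comm c])
    (fun u v v' => by funext w; simp [wedgeEnd, hB.2.1, add_smul, smul_add]; abel)
    (fun c u v => by funext w; simp [wedgeEnd, hB.2.2.1, mul_smul, smul_sub, smul_comm c])

@[simp] theorem wl_apply (hB : IsSymmNondeg B) (u v : T) : wl hB u v = wedgeEnd B u v := rfl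

theorem wedge_skew (B : T → T → ℝ) (u v : T) : wedgeEnd B v u = - wedgeEnd B u v := by
  funext w; simp [wedgeEnd]
theorem wedge_self (B : T → T → ℝ) (u : T) : wedgeEnd B u u = 0 := by
  funext w; simp [wedgeEnd]

theorem wedge_lin (hB : IsSymmNondeg B) (u v : T) : IsLinearMap ℝ (wedgeEnd B u v) := by
  constructor
  · intro x y; simp [wedgeEnd, addr hB, add_smul]; abel
  · intro c x; simp [wedgeEnd, smulr hB, mul_smul, smul_sub]

theorem brk_wedge (hB : IsSymmNondeg B) (u v x y : T) :
    brk (wedgeEnd B u v) (wedgeEnd B x y)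
      = B u y • wedgeEnd B x v + B v x • wedgeEnd B y u
        - B v y • wedgeEnd B x u - B u x • wedgeEnd B y v := by
  funext w
  simp only [brk, wedgeEnd, Pi.add_apply, Pi.sub_apply, Pi.smul_apply,
    subr hB, smulr hB, sub_smul, add_smul, smul_smul, smul_sub]
  rw [show B x v = B v x from hB.1 x v, show B x u = B u x from hB.1 x u,
    show B y v = B v y from hB.1 y v, show B y u = B u y from hB.1 y u]
  module

def LinSub (T : Type*) [AddCommGroup T] [Module ℝ T] : Submodule ℝ (T → T) where
  carrier := {f | IsLinearMap ℝ f}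
  add_mem' := fun hf hg => ⟨fun x y => by
      simp only [Pi.add_apply, hf.1, hg.1]; abel,
    fun c x => by simp only [Pi.add_apply, hf.2, hg.2, smul_add]⟩
  zero_mem' := ⟨fun x y => by simp, fun c x => by simp⟩
  smul_mem' := fun c f hf => ⟨fun x y => by
      simp only [Pi.smul_apply, hf.1, smul_add],
    fun a x => by simp only [Pi.smul_apply, hf.2, smul_comm a]⟩

theorem lin_of_mem_span {S : Set (T → T)} (h : ∀ f ∈ S, IsLinearMap ℝ f)
    {f : T → T} (hf : f ∈ Submodule.span ℝ S) : IsLinearMap ℝ f :=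
  Submodule.span_le (p := LinSub T) |>.mpr (fun g hg => h g hg) hf

theorem brk_span {R : Submodule ℝ (T → T)} {S₁ S₂ : Set (T → T)}
    (h₁ : ∀ f ∈ S₁, IsLinearMap ℝ f) (h₂ : ∀ g ∈ S₂, IsLinearMap ℝ g)
    (h : ∀ f ∈ S₁, ∀ g ∈ S₂, brk f g ∈ R) :
    ∀ f ∈ Submodule.span ℝ S₁, ∀ g ∈ Submodule.span ℝ S₂, brk f g ∈ R := by
  intro f hf
  induction hf using Submodule.span_induction with
  | mem f hfS =>
    intro g hg
    have hflin := h₁ f hfS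
    induction hg using Submodule.span_induction with
    | mem g hgS => exact h _ hfS _ hgS
    | zero =>
      have : brk f (0 : T → T) = 0 := funext fun w => by
        simp [brk, hflin.map_zero]
      rw [this]; exact R.zero_mem
    | add g g' hg hg' ih ih' =>
      have : brk f (g + g') = brk f g + brk f g' := funext fun w => by
        simp [brk, hflin.map_add]; abel
      rw [this]; exact R.add_mem ih ih'
    | smul c g hg ih =>
      have : brk f (c • g) = c • brk f g := funext fun w => by
        simp [brk, hflin.map_smul, smul_sub]
      rw [this]; exact R.smul_mem c ih
  | zero =>
    intro g hg
    have hglin := lin_of_mem_span h₂ hg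
    have : brk (0 : T → T) g = 0 := funext fun w => by
      simp [brk, hglin.map_zero]
    rw [this]; exact R.zero_mem
  | add f f' hfm hfm' ih ih' =>
    intro g hg
    have hglin := lin_of_mem_span h₂ hg
    have : brk (f + f') g = brk f g + brk f' g := funext fun w => by
      simp [brk, hglin.map_add]; abel
    rw [this]; exact R.add_mem (ih g hg) (ih' g hg)
  | smul c f hfm ih =>
    intro g hg
    have hglin := lin_of_mem_span h₂ hg
    have : brk (c • f) g = c • brk f g := funext fun w => by
      simp [brk, hglin.map_smul, smul_sub]
    rw [this]; exact R.smul_mem c (ih g hg)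

/-- evaluation functional f ↦ B (f a) b -/
noncomputable def evl (hB : IsSymmNondeg B) (a b : T) : (T → T) →ₗ[ℝ] ℝ where
  toFun f := B (f a) b
  map_add' f g := by simp [hB.2.1]
  map_smul' c f := by simp [hB.2.2.1]

/-- independence from a diagonalizing family of functionals -/
theorem li_of_dual_family {ι : Type*} [Fintype ι] [DecidableEq ι] (v : ι → T → T)
    (φ : ι → (T → T) →ₗ[ℝ] ℝ) (δ : ι → ℝ) (hδ : ∀ i, δ i ≠ 0)
    (h : ∀ i j, φ i (v j) = if j = i then δ i else 0) :
    LinearIndependent ℝ v := by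
  rw [Fintype.linearIndependent_iff]
  intro g hg i
  have := congrArg (φ i) hg
  rw [map_sum, map_zero] at this
  simp only [map_smul, h, smul_eq_mul, mul_ite, mul_zero] at this
  rw [Finset.sum_ite_eq' Finset.univ i (fun j => g j * δ i)] at this
  simp at this
  rcases this with h' | h'
  · exact h'
  · exact absurd h' (hδ i)

/-- dual family to an independent family, via nondegeneracy -/
theorem exists_dual (hB : IsSymmNondeg B) {k : Type*} [Fintype k] [DecidableEq k] (c : k → T)
    (hc : LinearIndependent ℝ c) :
    ∃ u : k → T, ∀ i j, B (c i) (u j) = if i = j then 1 else 0 := by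
  classical
  set Φ : T →ₗ[ℝ] (k → ℝ) := LinearMap.pi (fun i => bl hB (c i)) with hΦ
  have hΦap : ∀ (w : T) (i : k), Φ w i = B (c i) w := fun w i => rfl
  have hsurj : Function.Surjective Φ := by
    rw [← LinearMap.range_eq_top]
    by_contra hlt
    obtain ⟨ψ, hψ0, hψ⟩ := (LinearMap.range Φ).exists_dual_map_eq_bot_of_lt_top
      (lt_top_iff_ne_top.mpr hlt) inferInstance
    have hker : ∀ w : T, ψ (Φ w) = 0 := by
      intro w
      have : ψ (Φ w) ∈ (LinearMap.range Φ).map ψ :=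
        Submodule.mem_map_of_mem (LinearMap.mem_range_self Φ w)
      rwa [hψ, Submodule.mem_bot] at this
    set a : k → ℝ := fun i => ψ (fun j => if i = j then 1 else 0) with ha
    have hzero : ∀ w : T, B (∑ i, a i • c i) w = 0 := by
      intro w
      have h1 := hker w
      rw [pi_eq_sum_univ (Φ w), map_sum] at h1
      simp only [map_smul, smul_eq_mul, hΦap] at h1
      calc B (∑ i, a i • c i) w = ((bl hB).flip w) (∑ i, a i • c i) := rfl
        _ = ∑ i, a i * B (c i) w := by
            rw [map_sum]; apply Finset.sum_congr rfl; intro i _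
            show (bl hB).flip w (a i • c i) = _
            rw [map_smul]; rfl
        _ = 0 := by rw [← h1]; apply Finset.sum_congr rfl; intro i _; exact mul_comm _ _
    have hsum : (∑ i, a i • c i) = 0 := hB.2.2.2 _ hzero
    have hall : ∀ i : k, a i = 0 := by
      have h := linearIndependent_iff'.mp hc Finset.univ a (by simpa using hsum)
      exact fun i => h i (Finset.mem_univ i)
    apply hψ0
    apply LinearMap.ext
    intro x
    rw [pi_eq_sum_univ x, map_sum]
    simp only [map_smul, smul_eq_mul]
    have hz : ∀ i : k, ψ (fun j => if i = j then (1:ℝ) else 0) = 0 := hall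
    simp [hz]
  obtain ⟨u, hu⟩ : ∃ u : k → T, ∀ j, Φ (u j) = fun i => if i = j then 1 else 0 := by
    choose u hu using fun j => hsurj (fun i => if i = j then (1:ℝ) else 0)
    exact ⟨u, hu⟩
  refine ⟨u, fun i j => ?_⟩
  rw [← hΦap (u j) i, hu j]

end L2Aux

namespace L2Aux
open Submodule Module
variable {T : Type*} [AddCommGroup T] [Module ℝ T] {B : T → T → ℝ}

theorem card_lt_pairs (n : ℕ) :
    Fintype.card {p : Fin n × Fin n // p.1 < p.2} = n * (n - 1) / 2 := by
  rw [Fintype.card_congr (Equiv.subtypeProdEquivSigmaSubtype (fun a b : Fin n => a < b))]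
  rw [Fintype.card_sigma]
  have h1 : ∀ a : Fin n, Fintype.card {b : Fin n // a < b} = n - 1 - a.val := by
    intro a
    rw [Fintype.card_subtype, Finset.filter_lt_eq_Ioi, Fin.card_Ioi]
  simp only [h1]
  rw [Fin.sum_univ_eq_sum_range (fun i => n - 1 - i) n]
  rw [show (∑ i ∈ Finset.range n, (n - 1 - i))
      = ∑ i ∈ Finset.range n, ((fun j => j) (n - 1 - i)) from rfl]
  rw [Finset.sum_range_reflect (fun j => j) n]
  exact Finset.sum_range_id n

theorem span_coe_basis (W : Submodule ℝ T) {ι : Type*} (v : Basis ι ℝ W) :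
    Submodule.span ℝ (Set.range fun i => ((v i : T))) = W := by
  have h := congrArg (Submodule.map W.subtype) v.span_eq
  rw [Submodule.map_span, ← Set.range_comp, Submodule.map_subtype_top] at h
  exact h

theorem span_wedge_eq (hB : IsSymmNondeg B) (W₁ W₂ : Submodule ℝ T) {ι₁ ι₂ : Type*}
    (c₁ : ι₁ → T) (c₂ : ι₂ → T)
    (h₁ : Submodule.span ℝ (Set.range c₁) = W₁)
    (h₂ : Submodule.span ℝ (Set.range c₂) = W₂) :
    Submodule.span ℝ {f | ∃ u ∈ W₁, ∃ v ∈ W₂, f = wedgeEnd B u v}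
      = Submodule.span ℝ
          (Set.image2 (fun a b => wedgeEnd B a b) (Set.range c₁) (Set.range c₂)) := by
  have e1 : {f | ∃ u ∈ W₁, ∃ v ∈ W₂, f = wedgeEnd B u v}
      = Set.image2 (fun u v => (wl hB u) v) (W₁ : Set T) (W₂ : Set T) := by
    ext f
    simp only [Set.mem_setOf_eq, Set.mem_image2, wl_apply, SetLike.mem_coe]
    constructor
    · rintro ⟨u, hu, v, hv, rfl⟩; exact ⟨u, hu, v, hv, rfl⟩
    · rintro ⟨u, hu, v, hv, rfl⟩; exact ⟨u, hu, v, hv, rfl⟩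
  rw [e1, ← Submodule.map₂_eq_span_image2 (wl hB), ← h₁, ← h₂,
    Submodule.map₂_span_span]
  simp only [wl_apply]

/-- generic infinite-dimensional collapse -/
theorem finrank_zero_of_inj {W : Submodule ℝ T} {S : Submodule ℝ (T → T)}
    (hfd : ¬FiniteDimensional ℝ W)
    (hW : W ≠ ⊥ → ∃ φ : W →ₗ[ℝ] (S × ℝ), Function.Injective φ) :
    Module.finrank ℝ S = 0 := by
  by_cases hs : Module.Finite ℝ S
  · exfalso
    apply hfd
    have hWne : W ≠ ⊥ := by
      rintro rfl
      exact hfd inferInstance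
    obtain ⟨φ, hφ⟩ := hW hWne
    haveI := hs
    haveI : IsNoetherian ℝ (S × ℝ) := IsNoetherian.iff_fg.mpr inferInstance
    exact Module.Finite.of_injective φ hφ
  · exact Module.finrank_of_not_finite hs

theorem coe_basis_li {W : Submodule ℝ T} {ι : Type*} (v : Basis ι ℝ W) :
    LinearIndependent ℝ (fun i => ((v i : T))) :=
  v.linearIndependent.map' W.subtype (Submodule.ker_subtype W)

theorem finrank_wedge_self (hB : IsSymmNondeg B) (W : Submodule ℝ T) :
    Module.finrank ℝ (Submodule.span ℝ {f | ∃ u ∈ W, ∃ v ∈ W, f = wedgeEnd B u v})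
      = Module.finrank ℝ W * (Module.finrank ℝ W - 1) / 2 := by
  by_cases hfd : FiniteDimensional ℝ W
  · haveI := hfd
    set n := Module.finrank ℝ W with hn
    set v := Module.finBasis ℝ W with hv
    set c : Fin n → T := fun i => (v i : T) with hc
    obtain ⟨u, hu⟩ := exists_dual hB c (coe_basis_li v)
    set fam : {p : Fin n × Fin n // p.1 < p.2} → (T → T) :=
      fun p => wedgeEnd B (c p.1.1) (c p.1.2) with hfam
    have hspan : Submodule.span ℝ {f | ∃ u ∈ W, ∃ v ∈ W, f = wedgeEnd B u v}
        = Submodule.span ℝ (Set.range fam) := by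
      rw [span_wedge_eq hB W W c c (span_coe_basis W v) (span_coe_basis W v)]
      apply le_antisymm
      · rw [Submodule.span_le]
        rintro f ⟨a, ⟨i, rfl⟩, b, ⟨j, rfl⟩, rfl⟩
        show wedgeEnd B (c i) (c j) ∈ Submodule.span ℝ (Set.range fam)
        rcases lt_trichotomy i j with h | h | h
        · exact Submodule.subset_span ⟨⟨(i, j), h⟩, rfl⟩
        · subst h; rw [wedge_self]; exact Submodule.zero_mem _
        · rw [wedge_skew]
          exact Submodule.neg_mem _ (Submodule.subset_span ⟨⟨(j, i), h⟩, rfl⟩)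
      · rw [Submodule.span_le]
        rintro f ⟨p, rfl⟩
        exact Submodule.subset_span
          (Set.mem_image2_of_mem (Set.mem_range_self _) (Set.mem_range_self _))
    have hind : LinearIndependent ℝ fam := by
      apply li_of_dual_family fam (fun p => evl hB (u p.1.1) (u p.1.2))
        (fun _ => (1 : ℝ)) (fun _ => one_ne_zero)
      rintro ⟨⟨k, l⟩, hkl⟩ ⟨⟨i, j⟩, hij⟩
      have hev : evl hB (u k) (u l) (wedgeEnd B (c i) (c j))
          = B (c i) (u k) * B (c j) (u l) - B (c j) (u k) * B (c i) (u l) := by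
        show B (wedgeEnd B (c i) (c j) (u k)) (u l) = _
        simp [wedgeEnd, subl hB, hB.2.2.1]
      simp only [hfam, hev, hu]
      have hsub : ((⟨(i, j), hij⟩ : {p : Fin n × Fin n // p.1 < p.2}) = ⟨(k, l), hkl⟩)
          ↔ (i = k ∧ j = l) := by simp [Subtype.ext_iff, Prod.ext_iff]
      by_cases hik : i = k
      · subst hik
        by_cases hjl : j = l
        · subst hjl
          simp [hsub, hij.ne']
        · simp [hsub, hjl, hij.ne']
      · have hcross : ¬(j = k ∧ i = l) := by
          rintro ⟨rfl, rfl⟩; exact absurd (hij.trans hkl) (lt_irrefl _)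
        by_cases hjk : j = k
        · have hil : ¬ i = l := fun h => hcross ⟨hjk, h⟩
          simp [hsub, hik, hjk, hil]
        · simp [hsub, hik, hjk]
    rw [hspan, finrank_span_eq_card hind, card_lt_pairs n]
  · rw [Module.finrank_of_not_finite hfd]
    rw [show (0 * (0 - 1) / 2 : ℕ) = 0 from rfl]
    apply finrank_zero_of_inj hfd
    intro hWne
    obtain ⟨u, hu, hune⟩ := Submodule.exists_mem_ne_zero_of_ne_bot hWne
    obtain ⟨w₀, hw₀⟩ : ∃ w₀ : T, B u w₀ ≠ 0 := by
      by_contra h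
      push_neg at h
      exact hune (hB.2.2.2 u h)
    set f1 : W →ₗ[ℝ] (T → T) := (wl hB u).comp W.subtype with hf1
    have hmem : ∀ w : W, f1 w ∈ Submodule.span ℝ {f | ∃ u ∈ W, ∃ v ∈ W, f = wedgeEnd B u v} :=
      fun w => Submodule.subset_span ⟨u, hu, w.1, w.2, rfl⟩
    refine ⟨(LinearMap.codRestrict _ f1 hmem).prod (((bl hB).flip w₀).comp W.subtype), ?_⟩
    rw [← LinearMap.ker_eq_bot, LinearMap.ker_eq_bot']
    intro w hw
    have hw1 : wedgeEnd B u (w : T) = 0 := congrArg Subtype.val (Prod.ext_iff.mp hw).1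
    have hw2 : B (w : T) w₀ = 0 := (Prod.ext_iff.mp hw).2
    have heval := congrFun hw1 w₀
    simp only [wedgeEnd, Pi.zero_apply] at heval
    rw [hw2, zero_smul, sub_zero] at heval
    have hww : (w : T) = 0 := by
      have h2 := congrArg (fun z => (B u w₀)⁻¹ • z) heval
      simpa [smul_smul, inv_mul_cancel₀ hw₀] using h2
    exact Subtype.ext hww

theorem wedge_zero_right (hB : IsSymmNondeg B) (u : T) : wedgeEnd B u 0 = 0 := by
  funext w; simp [wedgeEnd, zerol hB]
theorem wedge_zero_left (hB : IsSymmNondeg B) (v : T) : wedgeEnd B (0 : T) v = 0 := by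
  funext w; simp [wedgeEnd, zerol hB]

theorem finrank_wedge_mixed (hB : IsSymmNondeg B) (W₁ W₂ : Submodule ℝ T)
    (hdisj : Disjoint W₁ W₂) :
    Module.finrank ℝ (Submodule.span ℝ {f | ∃ u ∈ W₁, ∃ v ∈ W₂, f = wedgeEnd B u v})
      = Module.finrank ℝ W₂ * Module.finrank ℝ W₁ := by
  by_cases hfd₁ : FiniteDimensional ℝ W₁
  · by_cases hfd₂ : FiniteDimensional ℝ W₂
    · haveI := hfd₁; haveI := hfd₂
      set m := Module.finrank ℝ W₁ with hm
      set r := Module.finrank ℝ W₂ with hr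
      set v₁ := Module.finBasis ℝ W₁ with hv₁
      set v₂ := Module.finBasis ℝ W₂ with hv₂
      set c₁ : Fin m → T := fun i => (v₁ i : T) with hc₁
      set c₂ : Fin r → T := fun i => (v₂ i : T) with hc₂
      have hli : LinearIndependent ℝ (Sum.elim c₁ c₂) := by
        apply LinearIndependent.sum_type (coe_basis_li v₁) (coe_basis_li v₂)
        rw [show Set.range c₁ = Set.range fun i => ((v₁ i : T)) from rfl,
          span_coe_basis W₁ v₁, span_coe_basis W₂ v₂]
        exact hdisj
      obtain ⟨u, hu⟩ := exists_dual hB (Sum.elim c₁ c₂) hli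
      set fam : Fin m × Fin r → (T → T) := fun q => wedgeEnd B (c₁ q.1) (c₂ q.2) with hfam
      have hspan : Submodule.span ℝ {f | ∃ u ∈ W₁, ∃ v ∈ W₂, f = wedgeEnd B u v}
          = Submodule.span ℝ (Set.range fam) := by
        rw [span_wedge_eq hB W₁ W₂ c₁ c₂ (span_coe_basis W₁ v₁) (span_coe_basis W₂ v₂)]
        apply le_antisymm
        · rw [Submodule.span_le]
          rintro f ⟨a, ⟨i, rfl⟩, b, ⟨j, rfl⟩, rfl⟩
          exact Submodule.subset_span ⟨(i, j), rfl⟩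
        · rw [Submodule.span_le]
          rintro f ⟨q, rfl⟩
          exact Submodule.subset_span
            (Set.mem_image2_of_mem (Set.mem_range_self _) (Set.mem_range_self _))
      have hind : LinearIndependent ℝ fam := by
        apply li_of_dual_family fam
          (fun q => evl hB (u (Sum.inl q.1)) (u (Sum.inr q.2)))
          (fun _ => (1 : ℝ)) (fun _ => one_ne_zero)
        rintro ⟨k, l⟩ ⟨i, j⟩
        have hev : evl hB (u (Sum.inl k)) (u (Sum.inr l)) (wedgeEnd B (c₁ i) (c₂ j))
            = B (c₁ i) (u (Sum.inl k)) * B (c₂ j) (u (Sum.inr l))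
              - B (c₂ j) (u (Sum.inl k)) * B (c₁ i) (u (Sum.inr l)) := by
          show B (wedgeEnd B (c₁ i) (c₂ j) (u (Sum.inl k))) (u (Sum.inr l)) = _
          simp [wedgeEnd, subl hB, hB.2.2.1]
        have h1 : B (c₁ i) (u (Sum.inl k)) = if i = k then 1 else 0 := by
          have := hu (Sum.inl i) (Sum.inl k); simpa using this
        have h2 : B (c₂ j) (u (Sum.inr l)) = if j = l then 1 else 0 := by
          have := hu (Sum.inr j) (Sum.inr l); simpa using this
        have h3 : B (c₂ j) (u (Sum.inl k)) = 0 := by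
          have := hu (Sum.inr j) (Sum.inl k); simpa using this
        have h4 : B (c₁ i) (u (Sum.inr l)) = 0 := by
          have := hu (Sum.inl i) (Sum.inr l); simpa using this
        simp only [hfam, hev, h1, h2, h3, h4, mul_zero, zero_mul, sub_zero]
        by_cases hik : i = k
        · by_cases hjl : j = l
          · simp [hik, hjl, Prod.ext_iff]
          · simp [hik, hjl, Prod.ext_iff]
        · simp [hik, Prod.ext_iff]
      rw [hspan, finrank_span_eq_card hind, Fintype.card_prod, Fintype.card_fin,
        Fintype.card_fin, mul_comm]
    · rw [Module.finrank_of_not_finite hfd₂, Nat.zero_mul]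
      by_cases hb : W₁ = ⊥
      · rw [show Submodule.span ℝ {f | ∃ u ∈ W₁, ∃ v ∈ W₂, f = wedgeEnd B u v} = ⊥ by
          rw [Submodule.span_eq_bot]
          rintro f ⟨a, ha, b, hb', rfl⟩
          rw [hb, Submodule.mem_bot] at ha
          rw [ha, wedge_zero_left hB]]
        exact finrank_bot ℝ _
      · obtain ⟨e, he, hene⟩ := Submodule.exists_mem_ne_zero_of_ne_bot hb
        apply finrank_zero_of_inj hfd₂
        intro _
        set f1 : W₂ →ₗ[ℝ] (T → T) := (wl hB e).comp W₂.subtype with hf1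
        have hmem : ∀ w : W₂, f1 w ∈
            Submodule.span ℝ {f | ∃ u ∈ W₁, ∃ v ∈ W₂, f = wedgeEnd B u v} :=
          fun w => Submodule.subset_span ⟨e, he, w.1, w.2, rfl⟩
        obtain ⟨w₀, hw₀⟩ : ∃ w₀ : T, B e w₀ ≠ 0 := by
          by_contra h; push_neg at h; exact hene (hB.2.2.2 e h)
        refine ⟨(LinearMap.codRestrict _ f1 hmem).prod (((bl hB).flip w₀).comp W₂.subtype), ?_⟩
        rw [← LinearMap.ker_eq_bot, LinearMap.ker_eq_bot']
        intro w hw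
        have hw1 : wedgeEnd B e (w : T) = 0 := congrArg Subtype.val (Prod.ext_iff.mp hw).1
        have hw2 : B (w : T) w₀ = 0 := (Prod.ext_iff.mp hw).2
        have heval := congrFun hw1 w₀
        simp only [wedgeEnd, Pi.zero_apply] at heval
        rw [hw2, zero_smul, sub_zero] at heval
        have hww : (w : T) = 0 := by
          have h2 := congrArg (fun z => (B e w₀)⁻¹ • z) heval
          simpa [smul_smul, inv_mul_cancel₀ hw₀] using h2
        exact Subtype.ext hww
  · rw [Module.finrank_of_not_finite hfd₁, Nat.mul_zero]
    by_cases hb : W₂ = ⊥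
    · rw [show Submodule.span ℝ {f | ∃ u ∈ W₁, ∃ v ∈ W₂, f = wedgeEnd B u v} = ⊥ by
        rw [Submodule.span_eq_bot]
        rintro f ⟨a, ha, b, hb', rfl⟩
        rw [hb, Submodule.mem_bot] at hb'
        rw [hb', wedge_zero_right hB]]
      exact finrank_bot ℝ _
    · obtain ⟨e, he, hene⟩ := Submodule.exists_mem_ne_zero_of_ne_bot hb
      apply finrank_zero_of_inj hfd₁
      intro _
      set f1 : W₁ →ₗ[ℝ] (T → T) := ((wl hB).flip e).comp W₁.subtype with hf1
      have hmem : ∀ w : W₁, f1 w ∈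
          Submodule.span ℝ {f | ∃ u ∈ W₁, ∃ v ∈ W₂, f = wedgeEnd B u v} :=
        fun w => Submodule.subset_span ⟨w.1, w.2, e, he, rfl⟩
      obtain ⟨w₀, hw₀⟩ : ∃ w₀ : T, B e w₀ ≠ 0 := by
        by_contra h; push_neg at h; exact hene (hB.2.2.2 e h)
      refine ⟨(LinearMap.codRestrict _ f1 hmem).prod 0, ?_⟩
      rw [← LinearMap.ker_eq_bot, LinearMap.ker_eq_bot']
      intro w hw
      have hw1 : wedgeEnd B (w : T) e = 0 := congrArg Subtype.val (Prod.ext_iff.mp hw).1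
      have heval := congrFun hw1 w₀
      simp only [wedgeEnd, Pi.zero_apply] at heval
      -- B w w₀ • e - B e w₀ • w = 0  ⇒  w ∈ span e ≤ W₂, and w ∈ W₁, disjoint ⇒ w = 0
      have hww : (w : T) = ((B e w₀)⁻¹ * B (w : T) w₀) • e := by
        have h2 := congrArg (fun z => (B e w₀)⁻¹ • z) heval
        simp only [smul_sub, smul_smul, smul_zero] at h2
        rw [inv_mul_cancel₀ hw₀, one_smul, sub_eq_zero] at h2
        exact h2.symm
      have hmem2 : (w : T) ∈ W₂ := hww ▸ W₂.smul_mem _ he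
      exact Subtype.ext (Submodule.disjoint_def.mp hdisj (w : T) w.2 hmem2)

end L2Aux

open L2Aux Submodule Module in
/-- for `T' = T₁ ⊕ T₂` orthogonal with `B` definite on `T₁` (`dim T₁ = m`)
and `T₂` totally null of dimension `r`, the Lie algebra `Λ²T' ⊆ so(T)` is
`(so(m) ⊕ a(r)) ⋉ ℝ^{rm}`: it is spanned by `Λ²T₁`, `a(r) = Λ²T₂` and `N = T₁ ∧ T₂`, is
bracket-closed, `Λ²T₁ ≅ so(m)` has dimension `m(m-1)/2` and acts standardly on `N`,
`a(r)` is abelian of dimension `r(r-1)/2`, commutes with `so(m)` and acts trivially on `N`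
modulo `Λ²T₂`, and `N ≅ ℝ^{rm}` is an abelian ideal. -/
theorem lambda2_semidirect_so_m_plus_abelian
    {T : Type*} [AddCommGroup T] [Module ℝ T]
    (B : T → T → ℝ) (hB : IsSymmNondeg B)
    (T₁ T₂ : Submodule ℝ T) (m r : ℕ)
    (hm : Module.finrank ℝ T₁ = m) (hr : Module.finrank ℝ T₂ = r)
    (hdef : (∀ x ∈ T₁, x ≠ 0 → 0 < B x x) ∨ (∀ x ∈ T₁, x ≠ 0 → B x x < 0))
    (hnull : ∀ x ∈ T₂, ∀ y ∈ T₂, B x y = 0)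
    (horth : ∀ x ∈ T₁, ∀ y ∈ T₂, B x y = 0)
    (A A₁ A₂ N : Submodule ℝ (T → T))
    (hA : A = Submodule.span ℝ
      {f | ∃ u ∈ T₁ ⊔ T₂, ∃ v ∈ T₁ ⊔ T₂, f = wedgeEnd B u v})
    (hA₁ : A₁ = Submodule.span ℝ {f | ∃ u ∈ T₁, ∃ v ∈ T₁, f = wedgeEnd B u v})
    (hA₂ : A₂ = Submodule.span ℝ {f | ∃ u ∈ T₂, ∃ v ∈ T₂, f = wedgeEnd B u v})
    (hN : N = Submodule.span ℝ {f | ∃ u ∈ T₁, ∃ v ∈ T₂, f = wedgeEnd B u v}) :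
    A = A₁ ⊔ A₂ ⊔ N ∧
    (∀ f ∈ A, ∀ g ∈ A, brk f g ∈ A) ∧
    (∀ f ∈ A₁, ∀ g ∈ A₁, brk f g ∈ A₁) ∧
    (∀ f ∈ A₁, (∀ x ∈ T₁, f x ∈ T₁) ∧
      (∀ x ∈ T₁, ∀ y ∈ T₁, B (f x) y + B x (f y) = 0)) ∧
    Module.finrank ℝ A₁ = m * (m - 1) / 2 ∧
    (∀ f ∈ A₂, ∀ g ∈ A₂, brk f g = 0) ∧
    Module.finrank ℝ A₂ = r * (r - 1) / 2 ∧
    (∀ f ∈ A₁, ∀ g ∈ A₂, brk f g = 0) ∧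
    (∀ f ∈ A₂, ∀ g ∈ N, brk f g ∈ A₂) ∧
    (∀ f ∈ N, ∀ g ∈ N, brk f g ∈ A₂) ∧
    (∀ f ∈ A₁, ∀ g ∈ N, brk f g ∈ N) ∧
    Module.finrank ℝ N = r * m ∧
    (∀ u ∈ T₁, ∀ v ∈ T₁, ∀ x ∈ T₁, ∀ e ∈ T₂,
      brk (wedgeEnd B u v) (wedgeEnd B x e) = wedgeEnd B (wedgeEnd B u v x) e) := by
  subst hA hA₁ hA₂ hN hm hr
  have hsymm := hB.1
  -- linearity of all generators
  have hlin : ∀ (W₁ W₂ : Submodule ℝ T),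
      ∀ f ∈ {f | ∃ u ∈ W₁, ∃ v ∈ W₂, f = wedgeEnd B u v}, IsLinearMap ℝ f := by
    rintro W₁ W₂ f ⟨u, _, v, _, rfl⟩
    exact wedge_lin hB u v
  have horth' : ∀ x ∈ T₂, ∀ y ∈ T₁, B x y = 0 := by
    intro x hx y hy; rw [hsymm]; exact horth y hy x hx
  have hdisj : Disjoint T₁ T₂ := by
    rw [Submodule.disjoint_def]
    intro x hx1 hx2
    by_contra hne
    have h0 : B x x = 0 := horth x hx1 x hx2
    rcases hdef with h | h
    · exact absurd h0 (ne_of_gt (h x hx1 hne))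
    · exact absurd h0 (ne_of_lt (h x hx1 hne))
  refine ⟨?_, ?_, ?_, ?_, ?_, ?_, ?_, ?_, ?_, ?_, ?_, ?_, ?_⟩
  -- 1 : A = A₁ ⊔ A₂ ⊔ N
  · apply le_antisymm
    · rw [Submodule.span_le]
      rintro f ⟨u, hu, v, hv, rfl⟩
      obtain ⟨a, ha, b, hb, rfl⟩ := Submodule.mem_sup.mp hu
      obtain ⟨c, hc, d, hd, rfl⟩ := Submodule.mem_sup.mp hv
      have hdec : wedgeEnd B (a + b) (c + d)
          = wedgeEnd B a c + wedgeEnd B a d + wedgeEnd B b c + wedgeEnd B b d := by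
        simp only [← wl_apply hB, map_add, LinearMap.add_apply]
        abel
      rw [SetLike.mem_coe, hdec]
      refine add_mem (add_mem (add_mem ?_ ?_) ?_) ?_
      · exact Submodule.mem_sup_left (Submodule.mem_sup_left
          (Submodule.subset_span ⟨a, ha, c, hc, rfl⟩))
      · exact Submodule.mem_sup_right (Submodule.subset_span ⟨a, ha, d, hd, rfl⟩)
      · rw [show wedgeEnd B b c = - wedgeEnd B c b from wedge_skew B c b]
        exact neg_mem (Submodule.mem_sup_right (Submodule.subset_span ⟨c, hc, b, hb, rfl⟩))
      · exact Submodule.mem_sup_left (Submodule.mem_sup_right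
          (Submodule.subset_span ⟨b, hb, d, hd, rfl⟩))
    · refine sup_le (sup_le ?_ ?_) ?_ <;> apply Submodule.span_mono
      · rintro f ⟨u, hu, v, hv, rfl⟩
        exact ⟨u, Submodule.mem_sup_left hu, v, Submodule.mem_sup_left hv, rfl⟩
      · rintro f ⟨u, hu, v, hv, rfl⟩
        exact ⟨u, Submodule.mem_sup_right hu, v, Submodule.mem_sup_right hv, rfl⟩
      · rintro f ⟨u, hu, v, hv, rfl⟩
        exact ⟨u, Submodule.mem_sup_left hu, v, Submodule.mem_sup_right hv, rfl⟩
  -- 2 : [A,A] ⊆ A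
  · apply brk_span (hlin _ _) (hlin _ _)
    rintro f ⟨u, hu, v, hv, rfl⟩ g ⟨x, hx, y, hy, rfl⟩
    rw [brk_wedge hB]
    refine sub_mem (sub_mem (add_mem ?_ ?_) ?_) ?_ <;>
      exact Submodule.smul_mem _ _ (Submodule.subset_span ⟨_, ‹_›, _, ‹_›, rfl⟩)
  -- 3 : [A₁,A₁] ⊆ A₁
  · apply brk_span (hlin _ _) (hlin _ _)
    rintro f ⟨u, hu, v, hv, rfl⟩ g ⟨x, hx, y, hy, rfl⟩
    rw [brk_wedge hB]
    refine sub_mem (sub_mem (add_mem ?_ ?_) ?_) ?_ <;>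
      exact Submodule.smul_mem _ _ (Submodule.subset_span ⟨_, ‹_›, _, ‹_›, rfl⟩)
  -- 4 : so-condition
  · intro f hf
    induction hf using Submodule.span_induction with
    | mem f hfS =>
      obtain ⟨u, hu, v, hv, rfl⟩ := hfS
      constructor
      · intro x hx
        exact sub_mem (Submodule.smul_mem _ _ hv) (Submodule.smul_mem _ _ hu)
      · intro x hx y hy
        simp only [wedgeEnd, subl hB, subr hB, hB.2.2.1, smulr hB]
        rw [show B x v = B v x from hsymm x v, show B x u = B u x from hsymm x u]
        ring
    | zero =>
      exact ⟨fun x _ => by simp, fun x _ y _ => by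
        simp [zerol hB, hsymm x 0, zerol hB y]⟩
    | add f g hf hg ihf ihg =>
      refine ⟨fun x hx => ?_, fun x hx y hy => ?_⟩
      · exact add_mem (ihf.1 x hx) (ihg.1 x hx)
      · have h1 := ihf.2 x hx y hy
        have h2 := ihg.2 x hx y hy
        simp only [Pi.add_apply, hB.2.1, addr hB]
        linarith
    | smul c f hf ihf =>
      refine ⟨fun x hx => Submodule.smul_mem _ _ (ihf.1 x hx), fun x hx y hy => ?_⟩
      have h1 := ihf.2 x hx y hy
      simp only [Pi.smul_apply, hB.2.2.1, smulr hB]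
      rw [← mul_add, h1, mul_zero]
  -- 5 : finrank A₁
  · exact finrank_wedge_self hB T₁
  -- 6 : [A₂,A₂] = 0
  · intro f hf g hg
    have h := brk_span (R := (⊥ : Submodule ℝ (T → T))) (hlin T₂ T₂) (hlin T₂ T₂)
      ?_ f hf g hg
    · exact (Submodule.mem_bot ℝ).mp h
    · rintro f' ⟨u, hu, v, hv, rfl⟩ g' ⟨x, hx, y, hy, rfl⟩
      rw [brk_wedge hB, hnull u hu y hy, hnull v hv x hx, hnull v hv y hy,
        hnull u hu x hx]
      simp
  -- 7 : finrank A₂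
  · exact finrank_wedge_self hB T₂
  -- 8 : [A₁,A₂] = 0
  · intro f hf g hg
    have h := brk_span (R := (⊥ : Submodule ℝ (T → T))) (hlin T₁ T₁) (hlin T₂ T₂)
      ?_ f hf g hg
    · exact (Submodule.mem_bot ℝ).mp h
    · rintro f' ⟨u, hu, v, hv, rfl⟩ g' ⟨x, hx, y, hy, rfl⟩
      rw [brk_wedge hB, horth u hu y hy, horth v hv x hx, horth v hv y hy,
        horth u hu x hx]
      simp
  -- 9 : [A₂,N] ⊆ A₂
  · apply brk_span (hlin _ _) (hlin _ _)
    rintro f ⟨u, hu, v, hv, rfl⟩ g ⟨x, hx, y, hy, rfl⟩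
    rw [brk_wedge hB, hnull u hu y hy, horth' v hv x hx, hnull v hv y hy,
      horth' u hu x hx]
    simp
  -- 10 : [N,N] ⊆ A₂
  · apply brk_span (hlin _ _) (hlin _ _)
    rintro f ⟨u, hu, v, hv, rfl⟩ g ⟨x, hx, y, hy, rfl⟩
    rw [brk_wedge hB, horth u hu y hy, horth' v hv x hx, hnull v hv y hy]
    simp only [zero_smul, zero_add, sub_zero, zero_sub]
    exact neg_mem (Submodule.smul_mem _ _ (Submodule.subset_span ⟨y, hy, v, hv, rfl⟩))
  -- 11 : [A₁,N] ⊆ N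
  · apply brk_span (hlin _ _) (hlin _ _)
    rintro f ⟨u, hu, v, hv, rfl⟩ g ⟨x, hx, y, hy, rfl⟩
    rw [brk_wedge hB, horth u hu y hy, horth v hv y hy,
      show wedgeEnd B y u = - wedgeEnd B u y from wedge_skew B u y,
      show wedgeEnd B y v = - wedgeEnd B v y from wedge_skew B v y]
    simp only [zero_smul, zero_add, sub_zero, smul_neg, zero_sub, sub_neg_eq_add]
    refine add_mem (neg_mem ?_) ?_ <;>
      exact Submodule.smul_mem _ _ (Submodule.subset_span ⟨_, ‹_›, _, ‹_›, rfl⟩)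
  -- 12 : finrank N
  · exact finrank_wedge_mixed hB T₁ T₂ hdisj
  -- 13 : standard action
  · intro u hu v hv x hx e he
    rw [brk_wedge hB, horth u hu e he, horth v hv e he]
    show _ = wedgeEnd B (B u x • v - B v x • u) e
    rw [show wedgeEnd B e u = - wedgeEnd B u e from wedge_skew B u e,
      show wedgeEnd B e v = - wedgeEnd B v e from wedge_skew B v e]
    simp only [← wl_apply hB, map_sub, map_smul, LinearMap.sub_apply,
      LinearMap.smul_apply, zero_smul, smul_neg, zero_add, sub_zero]
    abel
end

section
/- Consider the Lorentzian pp-wave metric g = e^{-√2 t}(x² dt² + dt dz + dz dt + dx² + dy²) on ℝ⁴ with coordinates (t,x,y,z). Then for any constants c⁰, c' ∈ ℝ, the function σ = c⁰ + c' e^{-√2 t} satisfies the conformal-to-Einstein equation: the trace-free part of ∇∇σ + P σ vanishes, where ∇ is the Levi-Civita connection and P the Schouten tensor of g. In fact g is Ricci-flat and ∇∇σ = 0. -/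
noncomputable section

/-- Partial derivative of a function on `ι → ℝ` in the `i`-th coordinate direction. -/
def pderiv' {ι : Type} [Fintype ι] [DecidableEq ι]
    (i : ι) (f : (ι → ℝ) → ℝ) (x : ι → ℝ) : ℝ :=
  fderiv ℝ f x (Pi.single i 1)

/-- Christoffel symbols `Γ^k_{ij}` of the metric `g` (with pointwise inverse `ginv`). -/
def christoffel {ι : Type} [Fintype ι] [DecidableEq ι]
    (g ginv : (ι → ℝ) → ι → ι → ℝ) (k i j : ι) (x : ι → ℝ) : ℝ :=
  (1/2) * ∑ l, ginv x k l *
    (pderiv' i (fun y => g y l j) x + pderiv' j (fun y => g y l i) x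
      - pderiv' l (fun y => g y i j) x)

/-- Curvature tensor `R^l_{ijk}`, i.e. `R(∂_i,∂_j)∂_k = R^l_{ijk} ∂_l`. -/
def riemUp {ι : Type} [Fintype ι] [DecidableEq ι]
    (g ginv : (ι → ℝ) → ι → ι → ℝ) (l i j k : ι) (x : ι → ℝ) : ℝ :=
  pderiv' i (fun y => christoffel g ginv l j k y) x
    - pderiv' j (fun y => christoffel g ginv l i k y) x
    + ∑ m, christoffel g ginv l i m x * christoffel g ginv m j k x
    - ∑ m, christoffel g ginv l j m x * christoffel g ginv m i k x

/-- Ricci curvature `Ric_{jk} = R^l_{l j k}`. -/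
def ricciT {ι : Type} [Fintype ι] [DecidableEq ι]
    (g ginv : (ι → ℝ) → ι → ι → ℝ) (i j : ι) (x : ι → ℝ) : ℝ :=
  ∑ l, riemUp g ginv l l i j x

/-- Scalar curvature. -/
def scalT {ι : Type} [Fintype ι] [DecidableEq ι]
    (g ginv : (ι → ℝ) → ι → ι → ℝ) (x : ι → ℝ) : ℝ :=
  ∑ i, ∑ j, ginv x i j * ricciT g ginv i j x

/-- Covariant Hessian `∇_i ∇_j σ` of a function. -/
def hessT {ι : Type} [Fintype ι] [DecidableEq ι]
    (g ginv : (ι → ℝ) → ι → ι → ℝ) (σ : (ι → ℝ) → ℝ) (i j : ι) (x : ι → ℝ) : ℝ :=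
  pderiv' i (fun y => pderiv' j σ y) x - ∑ k, christoffel g ginv k i j x * pderiv' k σ x

/-- Laplacian `Δσ = g^{ij} ∇_i∇_j σ`. -/
def lapT {ι : Type} [Fintype ι] [DecidableEq ι]
    (g ginv : (ι → ℝ) → ι → ι → ℝ) (σ : (ι → ℝ) → ℝ) (x : ι → ℝ) : ℝ :=
  ∑ i, ∑ j, ginv x i j * hessT g ginv σ i j x

/-- Schouten tensor `P = (1/(n-2))(Ric - (Sc/(2(n-1))) g)` in dimension `n`. -/
def schoutenT {ι : Type} [Fintype ι] [DecidableEq ι] (n : ℕ)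
    (g ginv : (ι → ℝ) → ι → ι → ℝ) (i j : ι) (x : ι → ℝ) : ℝ :=
  (1/((n:ℝ) - 2)) * (ricciT g ginv i j x - (scalT g ginv x / (2*((n:ℝ) - 1))) * g x i j)

/-- Trace `J = g^{ij} P_{ij}` of the Schouten tensor. -/
def schoutenTr {ι : Type} [Fintype ι] [DecidableEq ι] (n : ℕ)
    (g ginv : (ι → ℝ) → ι → ι → ℝ) (x : ι → ℝ) : ℝ :=
  ∑ i, ∑ j, ginv x i j * schoutenT n g ginv i j x

/-- The pp-wave metric `e^{-√2 t}(x² dt² + 2 dt dz + dx² + dy²)` on `ℝ⁴`,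
coordinates `(t,x,y,z) = (0,1,2,3)`. -/
def gpp (x : Fin 4 → ℝ) (i j : Fin 4) : ℝ :=
  Real.exp (-(Real.sqrt 2) * x 0) *
    (if i = 0 ∧ j = 0 then (x 1)^2
     else if (i = 0 ∧ j = 3) ∨ (i = 3 ∧ j = 0) then 1
     else if (i = 1 ∧ j = 1) ∨ (i = 2 ∧ j = 2) then 1 else 0)

/-- The inverse of `gpp`. -/
def gppInv (x : Fin 4 → ℝ) (i j : Fin 4) : ℝ :=
  Real.exp (Real.sqrt 2 * x 0) *
    (if i = 3 ∧ j = 3 then -((x 1)^2)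
     else if (i = 0 ∧ j = 3) ∨ (i = 3 ∧ j = 0) then 1
     else if (i = 1 ∧ j = 1) ∨ (i = 2 ∧ j = 2) then 1 else 0)


-- ===== auxiliary lemmas =====

set_option linter.unnecessarySeqFocus false
set_option linter.unreachableTactic false
set_option linter.unusedTactic false

lemma pderiv'_eq {f : (Fin 4 → ℝ) → ℝ} {L : (Fin 4 → ℝ) →L[ℝ] ℝ} {x : Fin 4 → ℝ}
    (h : HasFDerivAt f L x) (i : Fin 4) :
    pderiv' i f x = L (Pi.single i 1) := by
  unfold pderiv'; rw [h.fderiv]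

def proj4 (k : Fin 4) : (Fin 4 → ℝ) →L[ℝ] ℝ := ContinuousLinearMap.proj k

lemma hproj (x : Fin 4 → ℝ) (k : Fin 4) :
    HasFDerivAt (fun y : Fin 4 → ℝ => y k) (proj4 k) x :=
  (proj4 k).hasFDerivAt

lemma eval_proj (i k : Fin 4) : proj4 k (Pi.single i (1:ℝ)) = if k = i then 1 else 0 := by
  simp [proj4, Pi.single_apply]

lemma pd_const (c : ℝ) (i : Fin 4) (x : Fin 4 → ℝ) :
    pderiv' i (fun _ : Fin 4 → ℝ => c) x = 0 := by
  rw [pderiv'_eq (hasFDerivAt_const c x) i]; simp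

lemma hE (x : Fin 4 → ℝ) :
    HasFDerivAt (fun y : Fin 4 → ℝ => Real.exp (-(Real.sqrt 2 * y 0)))
      (Real.exp (-(Real.sqrt 2 * x 0)) • (-(Real.sqrt 2 • proj4 0))) x :=
  (Real.hasDerivAt_exp _).comp_hasFDerivAt x ((hproj x 0).const_mul (Real.sqrt 2)).neg

lemma pd_exp (i : Fin 4) (x : Fin 4 → ℝ) :
    pderiv' i (fun y : Fin 4 → ℝ => Real.exp (-(Real.sqrt 2 * y 0))) x =
      if i = 0 then -Real.sqrt 2 * Real.exp (-(Real.sqrt 2 * x 0)) else 0 := by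
  rw [pderiv'_eq (hE x) i]
  fin_cases i <;> simp [eval_proj] <;> ring

lemma hpow2 (x : Fin 4 → ℝ) :
    HasFDerivAt (fun y : Fin 4 → ℝ => y 1 ^ 2) ((2 * x 1) • proj4 1) x := by
  have h := (hasDerivAt_pow 2 (x 1)).comp_hasFDerivAt x (hproj x 1)
  simp [Function.comp_def] at h; exact h

lemma pd_exp_sq (i : Fin 4) (x : Fin 4 → ℝ) :
    pderiv' i (fun y : Fin 4 → ℝ => Real.exp (-(Real.sqrt 2 * y 0)) * y 1 ^ 2) x =
      if i = 0 then -Real.sqrt 2 * Real.exp (-(Real.sqrt 2 * x 0)) * x 1 ^ 2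
      else if i = 1 then 2 * Real.exp (-(Real.sqrt 2 * x 0)) * x 1 else 0 := by
  rw [pderiv'_eq (f := fun y : Fin 4 → ℝ => Real.exp (-(Real.sqrt 2 * y 0)) * y 1 ^ 2) ((hE x).mul (hpow2 x)) i]
  fin_cases i <;> simp [eval_proj] <;> try ring_nf
  all_goals try tauto

lemma pd_coord1 (i : Fin 4) (x : Fin 4 → ℝ) :
    pderiv' i (fun y : Fin 4 → ℝ => y 1) x = if i = 1 then 1 else 0 := by
  rw [pderiv'_eq (hproj x 1) i]
  fin_cases i <;> simp [eval_proj]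

lemma pd_neg_coord1 (i : Fin 4) (x : Fin 4 → ℝ) :
    pderiv' i (fun y : Fin 4 → ℝ => -y 1) x = if i = 1 then -1 else 0 := by
  rw [pderiv'_eq (f := fun y : Fin 4 → ℝ => -y 1) (hproj x 1).neg i]
  fin_cases i <;> simp [eval_proj]

lemma pd_c_sq (c : ℝ) (i : Fin 4) (x : Fin 4 → ℝ) :
    pderiv' i (fun y : Fin 4 → ℝ => c * y 1 ^ 2) x =
      if i = 1 then c * (2 * x 1) else 0 := by
  rw [pderiv'_eq ((hpow2 x).const_mul c) i]
  fin_cases i <;> simp [eval_proj] <;> try ring_nf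
  all_goals try tauto

lemma pd_sigma (c0 c' : ℝ) (i : Fin 4) (x : Fin 4 → ℝ) :
    pderiv' i (fun y : Fin 4 → ℝ => c0 + c' * Real.exp (-(Real.sqrt 2 * y 0))) x =
      if i = 0 then c' * -Real.sqrt 2 * Real.exp (-(Real.sqrt 2 * x 0)) else 0 := by
  rw [pderiv'_eq (f := fun y : Fin 4 → ℝ => c0 + c' * Real.exp (-(Real.sqrt 2 * y 0))) ((hasFDerivAt_const c0 x).add ((hE x).const_mul c')) i]
  fin_cases i <;> simp [eval_proj] <;> try ring_nf
  all_goals try tauto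

lemma pd_cexp (c : ℝ) (i : Fin 4) (x : Fin 4 → ℝ) :
    pderiv' i (fun y : Fin 4 → ℝ => c * Real.exp (-(Real.sqrt 2 * y 0))) x =
      if i = 0 then c * -Real.sqrt 2 * Real.exp (-(Real.sqrt 2 * x 0)) else 0 := by
  rw [pderiv'_eq ((hE x).const_mul c) i]
  fin_cases i <;> simp [eval_proj] <;> try ring_nf
  all_goals try tauto

lemma pd_neg_cexp (c : ℝ) (i : Fin 4) (x : Fin 4 → ℝ) :
    pderiv' i (fun y : Fin 4 → ℝ => -(c * Real.exp (-(Real.sqrt 2 * y 0)))) x =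
      if i = 0 then -(c * -Real.sqrt 2 * Real.exp (-(Real.sqrt 2 * x 0))) else 0 := by
  rw [pderiv'_eq (f := fun y : Fin 4 → ℝ => -(c * Real.exp (-(Real.sqrt 2 * y 0)))) (((hE x).const_mul c).neg) i]
  fin_cases i <;> simp [eval_proj] <;> try ring_nf
  all_goals try tauto

/-- Closed form of the Christoffel symbols of `gpp`. -/
def Γfun (k i j : Fin 4) (x : Fin 4 → ℝ) : ℝ :=
  if k = 0 ∧ i = 0 ∧ j = 0 then -Real.sqrt 2
  else if k = 1 ∧ i = 0 ∧ j = 0 then -x 1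
  else if k = 1 ∧ ((i = 0 ∧ j = 1) ∨ (i = 1 ∧ j = 0)) then -Real.sqrt 2 / 2
  else if k = 2 ∧ ((i = 0 ∧ j = 2) ∨ (i = 2 ∧ j = 0)) then -Real.sqrt 2 / 2
  else if k = 3 ∧ i = 0 ∧ j = 0 then Real.sqrt 2 / 2 * x 1 ^ 2
  else if k = 3 ∧ ((i = 0 ∧ j = 1) ∨ (i = 1 ∧ j = 0)) then x 1
  else if k = 3 ∧ ((i = 1 ∧ j = 1) ∨ (i = 2 ∧ j = 2)) then Real.sqrt 2 / 2
  else 0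

lemma christoffel_gpp (k i j : Fin 4) (x : Fin 4 → ℝ) :
    christoffel gpp gppInv k i j x = Γfun k i j x := by
  have h1 : Real.exp (Real.sqrt 2 * x 0) = (Real.exp (-(Real.sqrt 2 * x 0)))⁻¹ := by
    rw [← Real.exp_neg]; ring_nf
  fin_cases k <;> fin_cases i <;> fin_cases j <;>
    simp [christoffel, Fin.sum_univ_four, gpp, gppInv, Γfun, pd_exp, pd_exp_sq, pd_const, h1] <;>
    field_simp <;> ring

lemma ricci_gpp (i j : Fin 4) (x : Fin 4 → ℝ) : ricciT gpp gppInv i j x = 0 := by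
  have hs : Real.sqrt 2 * Real.sqrt 2 = 2 := Real.mul_self_sqrt (by norm_num)
  fin_cases i <;> fin_cases j <;>
    simp [ricciT, riemUp, Fin.sum_univ_four, christoffel_gpp, Γfun, pd_const,
      pd_neg_coord1, pd_coord1, pd_c_sq] <;>
    nlinarith [hs]

lemma hess_gpp (c0 c' : ℝ) (i j : Fin 4) (x : Fin 4 → ℝ) :
    hessT gpp gppInv (fun y => c0 + c' * Real.exp (-(Real.sqrt 2 * y 0))) i j x = 0 := by
  have hs : Real.sqrt 2 * Real.sqrt 2 = 2 := Real.mul_self_sqrt (by norm_num)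
  fin_cases i <;> fin_cases j <;>
    simp [hessT, Fin.sum_univ_four, christoffel_gpp, Γfun, pd_sigma, pd_cexp,
      pd_neg_cexp, pd_const] <;>
    nlinarith [hs]

lemma scal_gpp (x : Fin 4 → ℝ) : scalT gpp gppInv x = 0 := by
  simp [scalT, ricci_gpp]

lemma schouten_gpp (i j : Fin 4) (x : Fin 4 → ℝ) : schoutenT 4 gpp gppInv i j x = 0 := by
  simp [schoutenT, ricci_gpp, scal_gpp]

lemma lap_gpp (c0 c' : ℝ) (x : Fin 4 → ℝ) :
    lapT gpp gppInv (fun y => c0 + c' * Real.exp (-(Real.sqrt 2 * y 0))) x = 0 := by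
  simp [lapT, hess_gpp]

lemma schoutenTr_gpp (x : Fin 4 → ℝ) : schoutenTr 4 gpp gppInv x = 0 := by
  simp [schoutenTr, schouten_gpp]

/-- for the pp-wave metric, `g` is Ricci-flat, `∇∇σ = 0`, and
`σ = c⁰ + c' e^{-√2 t}` solves the conformal-to-Einstein equation: the trace-free part
of `∇∇σ + Pσ` vanishes. -/
theorem ppwave_almost_einstein_scales (c0 c' : ℝ) (σ : (Fin 4 → ℝ) → ℝ)
    (hσ : σ = fun x => c0 + c' * Real.exp (-(Real.sqrt 2) * x 0)) :
    (∀ (x : Fin 4 → ℝ) (i j : Fin 4), ricciT gpp gppInv i j x = 0) ∧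
    (∀ (x : Fin 4 → ℝ) (i j : Fin 4), hessT gpp gppInv σ i j x = 0) ∧
    (∀ (x : Fin 4 → ℝ) (i j : Fin 4),
      hessT gpp gppInv σ i j x + schoutenT 4 gpp gppInv i j x * σ x =
        (1/4) * (lapT gpp gppInv σ x + schoutenTr 4 gpp gppInv x * σ x) * gpp x i j) := by
  have hσ' : σ = fun y : Fin 4 → ℝ => c0 + c' * Real.exp (-(Real.sqrt 2 * y 0)) := by
    rw [hσ]; funext y; rw [neg_mul]
  subst hσ'
  refine ⟨fun x i j => ricci_gpp i j x, fun x i j => hess_gpp c0 c' i j x, fun x i j => ?_⟩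
  rw [hess_gpp, schouten_gpp, lap_gpp, schoutenTr_gpp]
  ring
end
end
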